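/- arXiv:1604.05351 — 4 statements merged into one kernel-verified Lean document; each statement's English description precedes it below -/
import Mathlib

section
/- Let f : ℝᵏ → ℝ₊ be a log-concave integrable function with 0 in the interior of its support, and let p > 0. Then the function x ↦ (∫₀^∞ t^{p-1} f(tx) dt)^{-1/p}, defined for x ≠ 0 and extended by 0 at the origin, is the Minkowski functional (gauge) of a convex body L_p(f) in ℝᵏ containing 0 in its interior; i.e., this function is a nonnegative positively homogeneous convex function of x. -/
open MeasureTheory Set Metric

namespace BallBodiesAux

noncomputable section

variable {k : ℕ} (f : EuclideanSpace ℝ (Fin k) → ℝ) (p : ℝ)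

/-- The support set. -/
def S : Set (EuclideanSpace ℝ (Fin k)) := {x | 0 < f x}

/-- The integrand of Ball's construction along the ray through `x`. -/
def hfun (x : EuclideanSpace ℝ (Fin k)) (t : ℝ) : ℝ := t ^ (p - 1) * f (t • x)

/-- The ray integral. -/
def I (x : EuclideanSpace ℝ (Fin k)) : ℝ := ∫ t in Set.Ioi (0:ℝ), hfun f p x t

/-- The part of the ray inside the support. -/
def J (x : EuclideanSpace ℝ (Fin k)) : Set ℝ := {t : ℝ | 0 < t ∧ t • x ∈ S f}

/-- The part of the ray inside the interior of the support. -/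
def IJ (x : EuclideanSpace ℝ (Fin k)) : Set ℝ :=
  {t : ℝ | 0 < t ∧ t • x ∈ interior (S f)}

/-- Bundled hypotheses. -/
structure Hyp (k : ℕ) (f : EuclideanSpace ℝ (Fin k) → ℝ) (p : ℝ) : Prop where
  hk : 1 ≤ k
  hf0 : ∀ x, 0 ≤ f x
  hfint : Integrable f
  h0 : (0 : EuclideanSpace ℝ (Fin k)) ∈ interior {x | 0 < f x}
  hlc : ConcaveOn ℝ {x | 0 < f x} (fun x => Real.log (f x))
  hp : 0 < p

variable {f p}

theorem mem_S_iff {z : EuclideanSpace ℝ (Fin k)} : z ∈ S f ↔ 0 < f z := Iff.rfl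

theorem Hyp.convexS (H : Hyp k f p) : Convex ℝ (S f) := H.hlc.1

theorem hfun_nonneg (H : Hyp k f p) (x : EuclideanSpace ℝ (Fin k)) {t : ℝ} (ht : 0 < t) :
    0 ≤ hfun f p x t :=
  mul_nonneg (Real.rpow_nonneg ht.le _) (H.hf0 _)

theorem f_eq_zero (H : Hyp k f p) {z : EuclideanSpace ℝ (Fin k)} (hz : z ∉ S f) : f z = 0 :=
  le_antisymm (not_lt.1 hz) (H.hf0 z)

theorem continuousOn_f (H : Hyp k f p) : ContinuousOn f (interior (S f)) := by
  have h := H.hlc.continuousOn_interior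
  have h2 : ContinuousOn (fun x => Real.exp (Real.log (f x))) (interior (S f)) :=
    Real.continuous_exp.comp_continuousOn h
  refine h2.congr fun z hz => ?_
  have hz' : 0 < f z := mem_S_iff.1 (interior_subset hz)
  show f z = Real.exp (Real.log (f z))
  rw [Real.exp_log hz']

/-- A ball around the origin on which `f` is bounded below. -/
theorem exists_ball (H : Hyp k f p) :
    ∃ δ m : ℝ, 0 < δ ∧ 0 < m ∧ ball (0 : EuclideanSpace ℝ (Fin k)) δ ⊆ interior (S f) ∧
      ∀ z ∈ ball (0 : EuclideanSpace ℝ (Fin k)) δ, m ≤ f z := by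
  obtain ⟨δ₀, hδ₀, hball⟩ := Metric.isOpen_iff.1 isOpen_interior 0 H.h0
  have hf0pos : 0 < f 0 := mem_S_iff.1 (interior_subset H.h0)
  have hca : ContinuousAt f 0 :=
    (continuousOn_f H).continuousAt (isOpen_interior.mem_nhds H.h0)
  have hev : {z : EuclideanSpace ℝ (Fin k) | f 0 / 2 < f z} ∈ nhds (0 : EuclideanSpace ℝ (Fin k)) :=
    hca (lt_mem_nhds (half_lt_self hf0pos))
  obtain ⟨δ₁, hδ₁, hb1⟩ := Metric.mem_nhds_iff.1 hev
  refine ⟨min δ₀ δ₁, f 0 / 2, lt_min hδ₀ hδ₁, half_pos hf0pos, ?_, ?_⟩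
  · exact fun z hz => hball (Metric.ball_subset_ball (min_le_left _ _) hz)
  · exact fun z hz => (hb1 (Metric.ball_subset_ball (min_le_right _ _) hz)).le

theorem mem_IJ_of_lt (H : Hyp k f p) {x : EuclideanSpace ℝ (Fin k)} {s t : ℝ}
    (ht : t ∈ J f x) (hs : 0 < s) (hst : s < t) : s ∈ IJ f x := by
  obtain ⟨htpos, htS⟩ := ht
  refine ⟨hs, ?_⟩
  have h1 : (0:ℝ) < 1 - s / t := by
    have : s / t < 1 := (div_lt_one htpos).2 hst
    linarith
  have h2 : (0:ℝ) ≤ s / t := div_nonneg hs.le htpos.le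
  have h := H.convexS.combo_interior_self_mem_interior H.h0 htS h1 h2 (by ring)
  have he : (1 - s / t) • (0 : EuclideanSpace ℝ (Fin k)) + (s / t) • (t • x) = s • x := by
    rw [smul_zero, zero_add, smul_smul]
    congr 1
    field_simp
  rwa [he] at h

theorem IJ_subset_J (x : EuclideanSpace ℝ (Fin k)) : IJ f x ⊆ J f x :=
  fun _ h => ⟨h.1, interior_subset h.2⟩

theorem isOpen_IJ (x : EuclideanSpace ℝ (Fin k)) : IsOpen (IJ f x) := by
  have : IJ f x = Set.Ioi 0 ∩ (fun t : ℝ => t • x) ⁻¹' interior (S f) := rfl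
  rw [this]
  exact isOpen_Ioi.inter (isOpen_interior.preimage (continuous_id.smul continuous_const))

theorem J_diff_IJ (H : Hyp k f p) (x : EuclideanSpace ℝ (Fin k)) :
    Set.Subsingleton (J f x \ IJ f x) := by
  intro a ha b hb
  by_contra hne
  rcases lt_or_gt_of_ne hne with h | h
  · exact ha.2 (mem_IJ_of_lt H hb.1 ha.1.1 h)
  · exact hb.2 (mem_IJ_of_lt H ha.1 hb.1.1 h)

theorem convex_J (H : Hyp k f p) (x : EuclideanSpace ℝ (Fin k)) : Convex ℝ (J f x) := by
  have hJ : J f x = Set.Ioi 0 ∩ (AffineMap.lineMap (0 : EuclideanSpace ℝ (Fin k)) x) ⁻¹' (S f) := by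
    ext t
    simp [J, AffineMap.lineMap_apply, S]
  rw [hJ]
  exact (convex_Ioi 0).inter (H.convexS.affine_preimage _)

theorem concaveOn_ray (H : Hyp k f p) (x : EuclideanSpace ℝ (Fin k)) :
    ConcaveOn ℝ (J f x) (fun t => Real.log (f (t • x))) := by
  have h := H.hlc.comp_affineMap (AffineMap.lineMap (0 : EuclideanSpace ℝ (Fin k)) x)
  have hmap : ⇑(AffineMap.lineMap (0 : EuclideanSpace ℝ (Fin k)) x) = fun t : ℝ => t • x := by
    funext t
    simp [AffineMap.lineMap_apply]
  rw [hmap] at h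
  exact ConcaveOn.subset h (fun t ht => ht.2) (convex_J H x)

theorem continuousOn_ray (H : Hyp k f p) (x : EuclideanSpace ℝ (Fin k)) :
    ContinuousOn (fun t => f (t • x)) (IJ f x) := by
  refine (continuousOn_f H).comp ((continuous_id.smul continuous_const).continuousOn) ?_
  exact fun t ht => ht.2

theorem continuousOn_hfun (H : Hyp k f p) (x : EuclideanSpace ℝ (Fin k)) :
    ContinuousOn (hfun f p x) (IJ f x) := by
  refine ContinuousOn.mul ?_ (continuousOn_ray H x)
  exact fun t ht => (Real.continuousAt_rpow_const t (p-1) (Or.inl ht.1.ne')).continuousWithinAt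

theorem hfun_pos (H : Hyp k f p) {x : EuclideanSpace ℝ (Fin k)} {t : ℝ} (ht : t ∈ IJ f x) :
    0 < hfun f p x t := by
  have h : 0 < f (t • x) := mem_S_iff.1 (interior_subset ht.2)
  exact mul_pos (Real.rpow_pos_of_pos ht.1 _) h

theorem aemeasurable_ray (H : Hyp k f p) (x : EuclideanSpace ℝ (Fin k)) :
    AEMeasurable (fun t => f (t • x)) (volume.restrict (Set.Ioi (0:ℝ))) := by
  have hopen := isOpen_IJ (f := f) x
  have h1 : AEMeasurable (fun t => f (t • x)) (volume.restrict (IJ f x)) :=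
    (continuousOn_ray H x).aemeasurable hopen.measurableSet
  have h2 : AEMeasurable ((IJ f x).indicator (fun t => f (t • x))) volume :=
    (aemeasurable_indicator_iff hopen.measurableSet).2 h1
  refine (h2.restrict (s := Set.Ioi 0)).congr ?_
  have hnull : volume (J f x \ IJ f x) = 0 := (J_diff_IJ H x).measure_zero _
  rw [Filter.EventuallyEq, ae_restrict_iff' measurableSet_Ioi]
  refine Filter.eventually_of_mem (compl_mem_ae_iff.2 hnull) ?_
  intro t htc htpos
  by_cases hIJ : t ∈ IJ f x
  · rw [Set.indicator_of_mem hIJ]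
  · rw [Set.indicator_of_notMem hIJ]
    by_cases hJ : t ∈ J f x
    · exact absurd ⟨hJ, hIJ⟩ htc
    · exact (f_eq_zero H (fun hS => hJ ⟨htpos, hS⟩)).symm

/-- Initial segment of the ray is in `IJ`. -/
theorem initial_segment (H : Hyp k f p) (x : EuclideanSpace ℝ (Fin k)) :
    ∃ τ₀ : ℝ, 0 < τ₀ ∧ Set.Ioo 0 τ₀ ⊆ IJ f x ∧
      ∃ m : ℝ, 0 < m ∧ ∀ t ∈ Set.Ioo (0:ℝ) τ₀, m ≤ f (t • x) := by
  obtain ⟨δ, m, hδ, hm, hsub, hlow⟩ := exists_ball H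
  have hden : (0:ℝ) < ‖x‖ + 1 := by positivity
  have hball' : ∀ t ∈ Set.Ioo (0:ℝ) (δ / (‖x‖ + 1)),
      t • x ∈ ball (0 : EuclideanSpace ℝ (Fin k)) δ := by
    intro t ht
    rw [mem_ball_zero_iff, norm_smul, Real.norm_eq_abs, abs_of_pos ht.1]
    have h1 : t * ‖x‖ ≤ t * (‖x‖ + 1) := by nlinarith [ht.1.le, norm_nonneg x]
    have h2 : t * (‖x‖ + 1) < δ := by
      have h3 := mul_lt_mul_of_pos_right ht.2 hden
      rwa [div_mul_cancel₀ _ hden.ne'] at h3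
    linarith
  exact ⟨δ / (‖x‖ + 1), div_pos hδ hden, fun t ht => ⟨ht.1, hsub (hball' t ht)⟩,
    m, hm, fun t ht => hlow _ (hball' t ht)⟩

/-- Global affine upper bound for `log f` along a ray. -/
theorem ray_upper_bound (H : Hyp k f p) (x : EuclideanSpace ℝ (Fin k)) :
    ∃ K L : ℝ, 0 ≤ L ∧ ∀ t ∈ J f x, f (t • x) ≤ Real.exp (K + L * t) := by
  obtain ⟨τ₀, hτ₀, hsub, -⟩ := initial_segment H x
  set φ : ℝ → ℝ := fun t => Real.log (f (t • x)) with hφ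
  have hconc := concaveOn_ray H x
  have ha : τ₀/4 ∈ J f x := IJ_subset_J x (hsub ⟨by positivity, by linarith⟩)
  have hb : τ₀/2 ∈ J f x := IJ_subset_J x (hsub ⟨by positivity, by linarith⟩)
  have hc : 3*τ₀/4 ∈ J f x := IJ_subset_J x (hsub ⟨by positivity, by linarith⟩)
  set a := τ₀/4 with hadef; set b := τ₀/2 with hbdef; set c := 3*τ₀/4 with hcdef
  have hab : a < b := by rw [hadef, hbdef]; linarith
  have hbc : b < c := by rw [hbdef, hcdef]; linarith
  have hbpos : 0 < b := by rw [hbdef]; linarith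
  have hcpos : 0 < c := by rw [hcdef]; linarith
  set σ₁ := (φ b - φ a)/(b - a) with hσ₁
  set σ₂ := (φ c - φ b)/(c - b) with hσ₂
  refine ⟨max (φ b + |σ₂| * b) (max (φ b + |σ₁| * c) (φ c + |σ₂| * c)), max σ₂ 0,
    le_max_right _ _, ?_⟩
  intro t ht
  have htpos : 0 < t := ht.1
  have hft : 0 < f (t • x) := ht.2
  have hLt : 0 ≤ max σ₂ 0 * t := mul_nonneg (le_max_right _ _) htpos.le
  rw [← Real.exp_log hft]
  apply Real.exp_le_exp.2
  show φ t ≤ _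
  rcases lt_or_ge t b with h1 | h1
  · -- t < b, use σ₂ and points t < b < c
    have hs := hconc.slope_anti_adjacent ht hc h1 hbc
    have h2 := mul_le_mul_of_nonneg_right hs (by linarith : (0:ℝ) ≤ b - t)
    rw [div_mul_cancel₀ _ (by linarith : b - t ≠ 0)] at h2
    -- h2 : σ₂ * (b - t) ≤ φ b - φ t
    have h3 : φ t ≤ φ b + |σ₂| * b := by
      nlinarith [neg_abs_le σ₂, le_abs_self σ₂, abs_nonneg σ₂]
    have h4 : φ b + |σ₂| * b ≤ max (φ b + |σ₂| * b) (max (φ b + |σ₁| * c) (φ c + |σ₂| * c)) :=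
      le_max_left _ _
    linarith
  rcases le_or_gt t c with h2 | h2
  · -- b ≤ t ≤ c
    have hbound : φ t ≤ φ b + |σ₁| * c := by
      rcases eq_or_lt_of_le h1 with heq | h1'
      · rw [← heq]
        nlinarith [abs_nonneg σ₁]
      · have hs := hconc.slope_anti_adjacent ha ht hab h1'
        have h3 := mul_le_mul_of_nonneg_right hs (by linarith : (0:ℝ) ≤ t - b)
        rw [div_mul_cancel₀ _ (by linarith : t - b ≠ 0)] at h3
        -- h3 : (φ t - φ b) ≤ σ₁ * (t - b)
        nlinarith [le_abs_self σ₁, abs_nonneg σ₁]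
    have h4 : φ b + |σ₁| * c ≤ max (φ b + |σ₂| * b) (max (φ b + |σ₁| * c) (φ c + |σ₂| * c)) :=
      le_max_of_le_right (le_max_left _ _)
    linarith
  · -- c < t
    have hs := hconc.slope_anti_adjacent hb ht hbc h2
    have h3 := mul_le_mul_of_nonneg_right hs (by linarith : (0:ℝ) ≤ t - c)
    rw [div_mul_cancel₀ _ (by linarith : t - c ≠ 0)] at h3
    -- h3 : φ t - φ c ≤ σ₂ * (t - c)
    have hstep : σ₂ * (t - c) ≤ max σ₂ 0 * t + |σ₂| * c := by
      rcases le_or_gt 0 σ₂ with hσ | hσ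
      · rw [max_eq_left hσ]
        nlinarith [abs_nonneg σ₂, mul_nonneg hσ hcpos.le]
      · rw [max_eq_right hσ.le, abs_of_neg hσ]
        nlinarith
    have h4 : φ c + |σ₂| * c ≤ max (φ b + |σ₂| * b) (max (φ b + |σ₁| * c) (φ c + |σ₂| * c)) :=
      le_max_of_le_right (le_max_right _ _)
    linarith

/-- If `f` stays bounded below along a ray, `f` is not integrable. -/
theorem not_decay_contra (H : Hyp k f p) {x : EuclideanSpace ℝ (Fin k)} (hx : x ≠ 0)
    {t₀ c : ℝ} (ht₀ : 0 < t₀) (hc : 0 < c) (hd : ∀ t : ℝ, t₀ ≤ t → c ≤ f (t • x)) :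
    False := by
  obtain ⟨δ, m, hδ, hm, hsub, hlow⟩ := exists_ball H
  have : Nontrivial (EuclideanSpace ℝ (Fin k)) := nontrivial_of_ne x 0 hx
  set m' := Real.exp ((Real.log c + Real.log m)/2) with hm'
  have hm'pos : 0 < m' := Real.exp_pos _
  have hxn : 0 < ‖x‖ := norm_pos_iff.2 hx
  set r := δ/2 with hr
  have hrpos : 0 < r := half_pos hδ
  -- every point of a ball of radius r centered at (t/2) • x has f ≥ m'
  have hball : ∀ t : ℝ, t₀ ≤ t → ∀ z ∈ ball ((t/2) • x) r, m' ≤ f z := by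
    intro t ht z hz
    have h1 : c ≤ f (t • x) := hd t ht
    have htS : t • x ∈ S f := mem_S_iff.2 (lt_of_lt_of_le hc h1)
    set w := (2:ℝ) • z - t • x with hw
    have hwball : w ∈ ball (0 : EuclideanSpace ℝ (Fin k)) δ := by
      rw [mem_ball_zero_iff]
      have hww : w = (2:ℝ) • (z - (t/2) • x) := by
        rw [hw, smul_sub, smul_smul]
        have e : (2:ℝ) * (t/2) = t := by ring
        rw [e]
      rw [hww, norm_smul]
      rw [mem_ball_iff_norm] at hz
      simp only [Real.norm_ofNat]
      rw [hr] at hz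
      linarith
    have hwS : w ∈ S f := interior_subset (hsub hwball)
    have hmw : m ≤ f w := hlow w hwball
    have hcomb := H.hlc.2 htS hwS (by norm_num : (0:ℝ) ≤ 1/2) (by norm_num : (0:ℝ) ≤ 1/2)
      (by norm_num)
    have hz' : (1/2 : ℝ) • (t • x) + (1/2 : ℝ) • w = z := by
      rw [hw, smul_sub, smul_smul, smul_smul]
      have e1 : (1/2 : ℝ) * 2 = 1 := by norm_num
      rw [e1, one_smul]
      abel
    rw [hz'] at hcomb
    have hzS : z ∈ S f := by
      have := H.convexS htS hwS (by norm_num : (0:ℝ) ≤ 1/2) (by norm_num : (0:ℝ) ≤ 1/2)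
        (by norm_num)
      rwa [hz'] at this
    have hfz : 0 < f z := mem_S_iff.1 hzS
    have hlog1 : Real.log c ≤ Real.log (f (t • x)) := Real.log_le_log hc h1
    have hlog2 : Real.log m ≤ Real.log (f w) := Real.log_le_log hm hmw
    have : (Real.log c + Real.log m)/2 ≤ Real.log (f z) := by
      simp only [smul_eq_mul] at hcomb
      linarith
    calc m' = Real.exp ((Real.log c + Real.log m)/2) := rfl
      _ ≤ Real.exp (Real.log (f z)) := Real.exp_le_exp.2 this
      _ = f z := Real.exp_log hfz
  -- disjoint balls
  set κ := (4*δ)/‖x‖ + 1 with hκdef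
  have hκ : 0 < κ := by positivity
  have hκx : 2 * δ < κ * ‖x‖ / 2 := by
    rw [hκdef, add_mul, div_mul_cancel₀ _ hxn.ne']
    nlinarith
  set ctr : ℕ → EuclideanSpace ℝ (Fin k) := fun n => (((t₀ + n * κ))/2) • x with hctr
  have hdisj : Pairwise (Function.onFun Disjoint (fun n => ball (ctr n) r)) := by
    intro i j hij
    apply ball_disjoint_ball
    rw [dist_eq_norm]
    have hsub' : ctr i - ctr j = (((i:ℝ) - j) * κ / 2) • x := by
      rw [hctr, ← sub_smul]
      congr 1
      ring
    rw [hsub', norm_smul, Real.norm_eq_abs]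
    have h1 : (1:ℝ) ≤ |(i:ℝ) - j| := by
      have hne : (i:ℤ) - j ≠ 0 := sub_ne_zero.2 (by exact_mod_cast hij)
      have := Int.one_le_abs hne
      have h2 : ((1:ℤ):ℝ) ≤ ((|(i:ℤ) - j| : ℤ) : ℝ) := by exact_mod_cast this
      push_cast at h2
      convert h2 using 2 <;> push_cast <;> ring
    have key1 : κ / 2 * ‖x‖ ≤ |(i:ℝ) - j| * (κ / 2 * ‖x‖) :=
      le_mul_of_one_le_left (by positivity) h1
    have habs : |((i:ℝ) - j) * κ / 2| = |(i:ℝ) - j| * κ / 2 := by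
      rw [abs_div, abs_mul, abs_of_pos hκ, abs_two]
    rw [habs]
    have hrr : r + r = δ := by rw [hr]; ring
    rw [hrr]
    nlinarith [key1, hκx]
  -- lower bound the integral of f
  set U := ⋃ n, ball (ctr n) r with hU
  have hUmeas : MeasurableSet U := MeasurableSet.iUnion fun n => measurableSet_ball
  have hvolU : volume U = ⊤ := by
    rw [hU, measure_iUnion hdisj fun n => measurableSet_ball]
    have hve : ∀ n : ℕ, volume (ball (ctr n) r) = volume (ball (0 : EuclideanSpace ℝ (Fin k)) r) :=
      fun n => Measure.addHaar_ball_center volume _ r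
    rw [tsum_congr hve]
    exact ENNReal.tsum_const_eq_top_of_ne_zero (measure_ball_pos volume _ hrpos).ne'
  have hlower : ∀ z ∈ U, m' ≤ f z := by
    intro z hz
    rw [hU, Set.mem_iUnion] at hz
    obtain ⟨n, hn⟩ := hz
    exact hball (t₀ + n * κ) (by nlinarith [Nat.cast_nonneg (α := ℝ) n]) z hn
  have hfin : (∫⁻ z, ‖f z‖₊) < ⊤ := H.hfint.2
  have hbig : (⊤ : ENNReal) ≤ ∫⁻ z, ‖f z‖₊ := by
    calc (⊤ : ENNReal) = ENNReal.ofReal m' * volume U := by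
          rw [hvolU, ENNReal.mul_top (by simp [ENNReal.ofReal_eq_zero, not_le, hm'pos])]
      _ = ∫⁻ _ in U, ENNReal.ofReal m' := (setLIntegral_const U _).symm
      _ ≤ ∫⁻ z in U, ‖f z‖₊ := by
          refine setLIntegral_mono' hUmeas fun z hz => ?_
          rw [← enorm_eq_nnnorm, Real.enorm_eq_ofReal (H.hf0 z)]
          exact ENNReal.ofReal_le_ofReal (hlower z hz)
      _ ≤ ∫⁻ z, ‖f z‖₊ := setLIntegral_le_lintegral _ _
  exact absurd (lt_of_le_of_lt hbig hfin) (lt_irrefl _)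

theorem aestronglyMeasurable_hfun (H : Hyp k f p) (x : EuclideanSpace ℝ (Fin k)) :
    AEStronglyMeasurable (hfun f p x) (volume.restrict (Set.Ioi (0:ℝ))) := by
  have h1 : Measurable (fun t : ℝ => t ^ (p-1)) := by fun_prop
  exact ((h1.aemeasurable.mul (aemeasurable_ray H x))).aestronglyMeasurable

theorem integrableOn_hfun (H : Hyp k f p) {x : EuclideanSpace ℝ (Fin k)} (hx : x ≠ 0) :
    IntegrableOn (hfun f p x) (Set.Ioi (0:ℝ)) := by
  obtain ⟨K, L, hL, hKL⟩ := ray_upper_bound H x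
  obtain ⟨τ₀, hτ₀, hsubIJ, m₀, hm₀, hlow₀⟩ := initial_segment H x
  by_cases hbdd : BddAbove (J f x)
  · obtain ⟨b, hb⟩ := hbdd
    have hbpos : 0 < b := lt_of_lt_of_le (half_pos hτ₀)
      (hb (IJ_subset_J x (hsubIJ ⟨half_pos hτ₀, half_lt_self hτ₀⟩)))
    set M := Real.exp (K + L * b) with hM
    have hMpos : 0 < M := Real.exp_pos _
    have hmajint : Integrable ((Set.Ioc (0:ℝ) b).indicator (fun t => t ^ (p-1) * M)) := by
      refine (IntegrableOn.integrable_indicator ?_ measurableSet_Ioc)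
      have h2 : IntegrableOn (fun t : ℝ => t ^ (p-1)) (Set.Ioc 0 b) :=
        (intervalIntegrable_iff_integrableOn_Ioc_of_le hbpos.le).1
          (intervalIntegral.intervalIntegrable_rpow' (by linarith [H.hp]))
      exact h2.mul_const M
    refine Integrable.mono' (hmajint.integrableOn) (aestronglyMeasurable_hfun H x) ?_
    rw [ae_restrict_iff' measurableSet_Ioi]
    refine Filter.Eventually.of_forall fun t ht => ?_
    rw [Real.norm_eq_abs, abs_of_nonneg (hfun_nonneg H x ht)]
    by_cases hJ : t ∈ J f x
    · have htb : t ≤ b := hb hJ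
      have hmem : t ∈ Set.Ioc (0:ℝ) b := Set.mem_Ioc.2 ⟨ht, htb⟩
      rw [Set.indicator_of_mem hmem]
      have h3 : f (t • x) ≤ Real.exp (K + L * t) := hKL t hJ
      have h4 : Real.exp (K + L * t) ≤ M := Real.exp_le_exp.2 (by nlinarith)
      exact mul_le_mul_of_nonneg_left (h3.trans h4) (Real.rpow_nonneg ht.le _)
    · have hf0' : f (t • x) = 0 := f_eq_zero H fun hS => hJ ⟨ht, hS⟩
      rw [hfun, hf0', mul_zero]
      exact Set.indicator_nonneg (fun s hs => mul_nonneg (Real.rpow_nonneg hs.1.le _) hMpos.le) t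
  · have hJ_all : Set.Ioi (0:ℝ) ⊆ J f x := by
      intro t ht
      obtain ⟨t', ht', htt'⟩ := not_bddAbove_iff.1 hbdd t
      exact IJ_subset_J x (mem_IJ_of_lt H ht' ht htt')
    by_cases hdec : ∃ t₁ t₂ : ℝ, 0 < t₁ ∧ t₁ < t₂ ∧ Real.log (f (t₂ • x)) < Real.log (f (t₁ • x))
    · obtain ⟨t₁, t₂, ht₁, ht₁₂, hlt⟩ := hdec
      have ht₂ : (0:ℝ) < t₂ := ht₁.trans ht₁₂
      set σ := (Real.log (f (t₂ • x)) - Real.log (f (t₁ • x)))/(t₂ - t₁) with hσ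
      have hσneg : σ < 0 := div_neg_of_neg_of_pos (by linarith) (by linarith)
      have hdecay : ∀ t : ℝ, t₂ < t →
          f (t • x) ≤ Real.exp (Real.log (f (t₂ • x)) + σ * (t - t₂)) := by
        intro t ht
        have hmem1 : t₁ ∈ J f x := hJ_all ht₁
        have hmem2 : t ∈ J f x := hJ_all (Set.mem_Ioi.2 (by linarith))
        have hs := (concaveOn_ray H x).slope_anti_adjacent hmem1 hmem2 ht₁₂ ht
        have h3 := mul_le_mul_of_nonneg_right hs (by linarith : (0:ℝ) ≤ t - t₂)
        rw [div_mul_cancel₀ _ (by linarith : t - t₂ ≠ 0)] at h3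
        have hft : 0 < f (t • x) := (hJ_all (by linarith : (0:ℝ) < t)).2
        rw [← Real.exp_log hft]
        exact Real.exp_le_exp.2 (by rw [hσ]; linarith)
      set C₁ := max (Real.exp (K + L * t₂ - σ * t₂))
        (Real.exp (Real.log (f (t₂ • x)) - σ * t₂)) with hC₁def
      have hC₁ : 0 < C₁ := lt_max_of_lt_left (Real.exp_pos _)
      have hint : IntegrableOn (fun t : ℝ => t ^ (p-1) * Real.exp (σ * t)) (Set.Ioi (0:ℝ)) := by
        have hb'pos : (0:ℝ) < -σ := neg_pos.2 hσneg
        have hgamma := Real.GammaIntegral_convergent H.hp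
        have hcomp := (integrableOn_Ioi_comp_mul_left_iff
          (fun s => Real.exp (-s) * s ^ (p-1)) 0 hb'pos).2 (by simpa using hgamma)
        have hconst : IntegrableOn
            (fun t : ℝ => ((-σ) ^ (p-1))⁻¹ * (Real.exp (-(-σ * t)) * (-σ * t) ^ (p-1)))
            (Set.Ioi (0:ℝ)) := hcomp.const_mul _
        refine hconst.congr_fun ?_ measurableSet_Ioi
        intro t ht
        simp only
        rw [Real.mul_rpow hb'pos.le (le_of_lt ht)]
        have hne : (-σ) ^ (p-1) ≠ 0 := (Real.rpow_pos_of_pos hb'pos _).ne'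
        have he : -(-σ * t) = σ * t := by ring
        rw [he]
        field_simp
      have hmaj2 : Integrable (fun t : ℝ => C₁ * (t ^ (p-1) * Real.exp (σ * t)))
          (volume.restrict (Set.Ioi (0:ℝ))) := hint.const_mul C₁
      refine Integrable.mono' hmaj2 (aestronglyMeasurable_hfun H x) ?_
      rw [ae_restrict_iff' measurableSet_Ioi]
      refine Filter.Eventually.of_forall fun t ht => ?_
      rw [Real.norm_eq_abs, abs_of_nonneg (hfun_nonneg H x ht)]
      have hbase : f (t • x) ≤ C₁ * Real.exp (σ * t) := by
        rw [hC₁def]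
        rcases le_or_gt t t₂ with h | h
        · have h1 : f (t • x) ≤ Real.exp (K + L * t) := hKL t (hJ_all ht)
          have h2 : Real.exp (K + L * t) ≤
              (Real.exp (K + L * t₂ - σ * t₂) ⊔ Real.exp (Real.log (f (t₂ • x)) - σ * t₂))
                * Real.exp (σ * t) := by
            have e1 : Real.exp (K + L*t) ≤ Real.exp (K + L*t₂ - σ*t₂) * Real.exp (σ*t) := by
              rw [← Real.exp_add]
              apply Real.exp_le_exp.2
              nlinarith
            exact e1.trans (mul_le_mul_of_nonneg_right (le_max_left _ _) (Real.exp_pos _).le)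
          exact h1.trans h2
        · have h1 := hdecay t h
          have e1 : Real.exp (Real.log (f (t₂ • x)) + σ * (t - t₂))
              = Real.exp (Real.log (f (t₂ • x)) - σ * t₂) * Real.exp (σ * t) := by
            rw [← Real.exp_add]
            ring_nf
          rw [e1] at h1
          exact h1.trans (mul_le_mul_of_nonneg_right (le_max_right _ _) (Real.exp_pos _).le)
      calc hfun f p x t = t ^ (p-1) * f (t • x) := rfl
        _ ≤ t ^ (p-1) * (C₁ * Real.exp (σ * t)) :=
            mul_le_mul_of_nonneg_left hbase (Real.rpow_nonneg ht.le _)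
        _ = C₁ * (t ^ (p-1) * Real.exp (σ * t)) := by ring
    · push_neg at hdec
      exfalso
      set t₀ := τ₀/2 with ht₀def
      have ht₀pos : 0 < t₀ := half_pos hτ₀
      have ht₀IJ : t₀ ∈ IJ f x := hsubIJ ⟨ht₀pos, half_lt_self hτ₀⟩
      have hft₀ : 0 < f (t₀ • x) := (IJ_subset_J x ht₀IJ).2
      refine not_decay_contra H hx ht₀pos hft₀ fun t ht => ?_
      rcases eq_or_lt_of_le ht with heq | hlt
      · rw [← heq]
      · have hlog := hdec t₀ t ht₀pos hlt
        have hft : 0 < f (t • x) := (hJ_all (ht₀pos.trans hlt)).2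
        calc f (t₀ • x) = Real.exp (Real.log (f (t₀ • x))) := (Real.exp_log hft₀).symm
          _ ≤ Real.exp (Real.log (f (t • x))) := Real.exp_le_exp.2 hlog
          _ = f (t • x) := Real.exp_log hft

theorem I_nonneg (H : Hyp k f p) (x : EuclideanSpace ℝ (Fin k)) : 0 ≤ I f p x :=
  setIntegral_nonneg measurableSet_Ioi fun _ ht => hfun_nonneg H x ht

theorem I_pos (H : Hyp k f p) {x : EuclideanSpace ℝ (Fin k)} (hx : x ≠ 0) : 0 < I f p x := by
  obtain ⟨τ₀, hτ₀, hsubIJ, m₀, hm₀, hlow₀⟩ := initial_segment H x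
  have hint := integrableOn_hfun H hx
  set a := τ₀/2 with hadef
  set b := 3*τ₀/4 with hbdef
  have hab : a < b := by rw [hadef, hbdef]; linarith
  have hapos : 0 < a := half_pos hτ₀
  set r₀ := min (a ^ (p-1)) (b ^ (p-1)) with hr₀
  have hr₀pos : 0 < r₀ :=
    lt_min (Real.rpow_pos_of_pos hapos _) (Real.rpow_pos_of_pos (hapos.trans hab) _)
  have hlow : ∀ t ∈ Set.Ioc a b, r₀ * m₀ ≤ hfun f p x t := by
    intro t htm
    have htpos : 0 < t := hapos.trans htm.1
    have htIoo : t ∈ Set.Ioo (0:ℝ) τ₀ := ⟨htpos, by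
      rcases htm with ⟨h1, h2⟩
      rw [hbdef] at h2
      linarith⟩
    have h1 : m₀ ≤ f (t • x) := hlow₀ t htIoo
    have h2 : r₀ ≤ t ^ (p-1) := by
      rcases le_or_gt 0 (p-1) with hsgn | hsgn
      · exact (min_le_left _ _).trans (Real.rpow_le_rpow hapos.le htm.1.le hsgn)
      · exact (min_le_right _ _).trans (Real.rpow_le_rpow_of_nonpos htpos htm.2 hsgn.le)
    calc r₀ * m₀ ≤ t ^ (p-1) * f (t • x) :=
          mul_le_mul h2 h1 hm₀.le (Real.rpow_nonneg htpos.le _)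
      _ = hfun f p x t := rfl
  have hmsub : Set.Ioc a b ⊆ Set.Ioi (0:ℝ) := fun t htm => hapos.trans htm.1
  have h1 : ∫ t in Set.Ioc a b, hfun f p x t ≤ I f p x := by
    refine setIntegral_mono_set hint ?_ (HasSubset.Subset.eventuallyLE hmsub)
    filter_upwards [ae_restrict_mem measurableSet_Ioi] with t ht
    exact hfun_nonneg H x ht
  have h2 : r₀ * m₀ * (volume (Set.Ioc a b)).toReal ≤ ∫ t in Set.Ioc a b, hfun f p x t := by
    refine setIntegral_ge_of_const_le_real measurableSet_Ioc (by simp) hlow (hint.mono_set hmsub)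
  have h3 : (volume (Set.Ioc a b)).toReal = b - a := by
    rw [Real.volume_Ioc, ENNReal.toReal_ofReal (by linarith)]
  rw [h3] at h2
  have : 0 < r₀ * m₀ * (b - a) := by
    apply mul_pos (mul_pos hr₀pos hm₀)
    linarith
  linarith

theorem I_smul (H : Hyp k f p) {x : EuclideanSpace ℝ (Fin k)} (hx : x ≠ 0) {c : ℝ}
    (hc : 0 < c) : I f p (c • x) = c ^ (-p) * I f p x := by
  have e : Set.EqOn (hfun f p (c • x)) (fun t => c ^ (-(p-1)) * hfun f p x (c * t))
      (Set.Ioi (0:ℝ)) := by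
    intro t ht
    have htpos : (0:ℝ) < t := ht
    show t ^ (p-1) * f (t • c • x) = c ^ (-(p-1)) * ((c*t) ^ (p-1) * f ((c*t) • x))
    rw [smul_smul, Real.mul_rpow hc.le htpos.le, mul_comm t c, Real.rpow_neg hc.le]
    have hne : c ^ (p-1) ≠ 0 := (Real.rpow_pos_of_pos hc _).ne'
    field_simp
  have e2 : I f p (c • x) = ∫ t in Set.Ioi (0:ℝ), c ^ (-(p-1)) * hfun f p x (c * t) :=
    setIntegral_congr_fun measurableSet_Ioi e
  rw [e2, MeasureTheory.integral_const_mul,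
    MeasureTheory.integral_comp_mul_left_Ioi (fun s => hfun f p x s) 0 hc, mul_zero,
    smul_eq_mul, ← mul_assoc]
  have h3 : c ^ (-(p-1)) * c⁻¹ = c ^ (-p) := by
    rw [← Real.rpow_neg_one c, ← Real.rpow_add hc]
    congr 1
    ring
  rw [h3]
  rfl

/-- Positivity of local integrals inside `IJ`. -/
theorem integral_pos_on (H : Hyp k f p) {x : EuclideanSpace ℝ (Fin k)} (hx : x ≠ 0)
    {a b : ℝ} (hab : a < b) (hsub : Set.Ioc a b ⊆ IJ f x) :
    0 < ∫ s in Set.Ioc a b, hfun f p x s := by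
  have hint := integrableOn_hfun H hx
  have hsub0 : Set.Ioc a b ⊆ Set.Ioi (0:ℝ) := fun t ht => (hsub ht).1
  set c := (a + b)/2 with hcdef
  have hca : a < c := by rw [hcdef]; linarith
  have hcb : c < b := by rw [hcdef]; linarith
  have hIccsub : Set.Icc c b ⊆ Set.Ioc a b := fun t ht => ⟨lt_of_lt_of_le hca ht.1, ht.2⟩
  have hcont : ContinuousOn (hfun f p x) (Set.Icc c b) :=
    (continuousOn_hfun H x).mono fun t ht => hsub (hIccsub ht)
  obtain ⟨s₀, hs₀mem, hs₀min⟩ := isCompact_Icc.exists_isMinOn (Set.nonempty_Icc.2 hcb.le) hcont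
  have hm1 : 0 < hfun f p x s₀ := hfun_pos H (hsub (hIccsub hs₀mem))
  have h1 : ∫ s in Set.Ioc c b, hfun f p x s ≤ ∫ s in Set.Ioc a b, hfun f p x s := by
    refine setIntegral_mono_set (hint.mono_set hsub0) ?_
      (HasSubset.Subset.eventuallyLE fun t ht => ⟨hca.trans ht.1, ht.2⟩)
    filter_upwards [ae_restrict_mem measurableSet_Ioc] with t ht
    exact hfun_nonneg H x ((hsub0 ht))
  have h2 : hfun f p x s₀ * (volume (Set.Ioc c b)).toReal ≤ ∫ s in Set.Ioc c b, hfun f p x s := by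
    refine setIntegral_ge_of_const_le_real measurableSet_Ioc (by simp) ?_
      ((hint.mono_set hsub0).mono_set (fun t ht => ⟨hca.trans ht.1, ht.2⟩))
    intro t ht
    exact hs₀min (Set.mem_Icc.2 ⟨ht.1.le, ht.2⟩)
  have h3 : (volume (Set.Ioc c b)).toReal = b - c := by
    rw [Real.volume_Ioc, ENNReal.toReal_ofReal (by linarith)]
  rw [h3] at h2
  have h4 : 0 < hfun f p x s₀ * (b - c) := mul_pos hm1 (by linarith)
  linarith

/-- The difference of primitives equals local integrals. -/
theorem exists_param (H : Hyp k f p) {x : EuclideanSpace ℝ (Fin k)} (hx : x ≠ 0) :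
    ∃ u : ℝ → ℝ, ∀ τ ∈ Set.Ioo (0:ℝ) 1,
      u τ ∈ IJ f x ∧ HasDerivAt u (I f p x / hfun f p x (u τ)) τ := by
  have hint := integrableOn_hfun H hx
  have hP : 0 < I f p x := I_pos H hx
  set P := I f p x with hPdef
  set g : ℝ → ℝ := (Set.Ioi (0:ℝ)).indicator (hfun f p x) with hgdef
  have hgint : Integrable g := hint.integrable_indicator measurableSet_Ioi
  have hgnn : ∀ t, 0 ≤ g t := by
    intro t
    by_cases h : t ∈ Set.Ioi (0:ℝ)
    · rw [hgdef, Set.indicator_of_mem h]; exact hfun_nonneg H x h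
    · rw [hgdef, Set.indicator_of_notMem h]
  set Φ : ℝ → ℝ := fun t => ∫ s in (0:ℝ)..t, g s with hΦdef
  have hΦcont : Continuous Φ :=
    intervalIntegral.continuous_primitive (fun a b => hgint.intervalIntegrable) 0
  have hΦdiff : ∀ a b : ℝ, Φ b - Φ a = ∫ s in a..b, g s := by
    intro a b
    rw [hΦdef]
    exact intervalIntegral.integral_interval_sub_left hgint.intervalIntegrable
      hgint.intervalIntegrable
  have hΦmono : Monotone Φ := by
    intro a b hab
    have h1 := hΦdiff a b
    have h2 : 0 ≤ ∫ s in a..b, g s :=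
      intervalIntegral.integral_nonneg hab fun s _ => hgnn s
    linarith
  have hΦ0 : Φ 0 = 0 := intervalIntegral.integral_same
  have hΦeq : ∀ t : ℝ, 0 ≤ t → Φ t = ∫ s in Set.Ioc 0 t, hfun f p x s := by
    intro t ht
    rw [hΦdef]
    simp only
    rw [intervalIntegral.integral_of_le ht]
    refine setIntegral_congr_fun measurableSet_Ioc fun s hs => ?_
    rw [hgdef, Set.indicator_of_mem (Set.mem_Ioi.2 hs.1)]
  -- tendsto P
  have hUnion : (⋃ n : ℕ, Set.Ioc (0:ℝ) n) = Set.Ioi 0 := by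
    ext t
    simp only [Set.mem_iUnion, Set.mem_Ioc, Set.mem_Ioi]
    constructor
    · rintro ⟨n, h1, h2⟩; exact h1
    · intro h
      obtain ⟨n, hn⟩ := exists_nat_ge t
      exact ⟨n, h, hn⟩
  have hlim : Filter.Tendsto (fun n : ℕ => Φ n) Filter.atTop (nhds P) := by
    have h1 := MeasureTheory.tendsto_setIntegral_of_monotone
      (s := fun n : ℕ => Set.Ioc (0:ℝ) n) (f := hfun f p x)
      (fun n => measurableSet_Ioc)
      (fun m n hmn => Set.Ioc_subset_Ioc_right (by exact_mod_cast hmn))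
      (by rw [hUnion]; exact hint)
    rw [hUnion] at h1
    refine h1.congr fun n => ?_
    exact (hΦeq n (Nat.cast_nonneg n)).symm
  -- the inverse map
  set u : ℝ → ℝ := fun τ => sSup {t | Φ t ≤ τ * P} with hudef
  have hmain : ∀ τ ∈ Set.Ioo (0:ℝ) 1, Φ (u τ) = τ * P ∧ 0 < u τ ∧ u τ ∈ IJ f x := by
    intro τ hτ
    obtain ⟨hτ0, hτ1⟩ := hτ
    have hτP : 0 < τ * P := mul_pos hτ0 hP
    have hτP' : τ * P < P := by nlinarith
    obtain ⟨n, hn⟩ : ∃ n : ℕ, τ * P < Φ n :=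
      (hlim.eventually (eventually_gt_nhds hτP')).exists
    have hbddS : BddAbove {t | Φ t ≤ τ * P} := by
      refine ⟨n, fun t htm => ?_⟩
      by_contra hlt
      push_neg at hlt
      exact absurd (le_trans (hΦmono hlt.le) htm) (not_le.2 hn)
    have hneS : Set.Nonempty {t | Φ t ≤ τ * P} := ⟨0, by
      rw [Set.mem_setOf_eq, hΦ0]; exact hτP.le⟩
    have hclosed : IsClosed {t | Φ t ≤ τ * P} := isClosed_le hΦcont continuous_const
    have humem : u τ ∈ {t | Φ t ≤ τ * P} := hclosed.csSup_mem hneS hbddS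
    have hΦu_le : Φ (u τ) ≤ τ * P := humem
    have hΦu_ge : τ * P ≤ Φ (u τ) := by
      by_contra hlt2
      push_neg at hlt2
      have hev : ∀ᶠ s in nhds (u τ), Φ s < τ * P :=
        (hΦcont.continuousAt (x := u τ)).eventually (eventually_lt_nhds hlt2)
      obtain ⟨ε, hε, hball⟩ := Metric.eventually_nhds_iff.1 hev
      have hmem2 : u τ + ε/2 ∈ {t | Φ t ≤ τ * P} := by
        refine le_of_lt (hball ?_)
        rw [Real.dist_eq, abs_of_pos (by linarith : (0:ℝ) < u τ + ε/2 - u τ)]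
        linarith
      have := le_csSup hbddS hmem2
      linarith
    have hΦueq : Φ (u τ) = τ * P := le_antisymm hΦu_le hΦu_ge
    have hupos : 0 < u τ := by
      by_contra h
      push_neg at h
      have h1 : Φ (u τ) ≤ Φ 0 := hΦmono h
      rw [hΦ0] at h1
      linarith [hΦueq ▸ h1, hτP]
    have hmass : ∫ s in Set.Ioi (u τ), hfun f p x s = P - Φ (u τ) := by
      have hd : Disjoint (Set.Ioc 0 (u τ)) (Set.Ioi (u τ)) := by
        rw [Set.disjoint_left]
        rintro s ⟨_, h1⟩ h2
        exact absurd h1 (not_le.2 h2)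
      have hun : Set.Ioc 0 (u τ) ∪ Set.Ioi (u τ) = Set.Ioi (0:ℝ) :=
        Set.Ioc_union_Ioi_eq_Ioi hupos.le
      have hsplit := setIntegral_union hd measurableSet_Ioi
        (hint.mono_set fun s hs => Set.mem_Ioi.2 hs.1)
        (hint.mono_set fun s hs => Set.mem_Ioi.2 (hupos.trans hs))
      rw [hun] at hsplit
      have hIP : (∫ s in Set.Ioi (0:ℝ), hfun f p x s) = P := rfl
      rw [hIP] at hsplit
      rw [hΦeq (u τ) hupos.le]
      linarith [hsplit]
    have hextJ : ∃ t', t' ∈ J f x ∧ u τ < t' := by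
      by_contra hno
      push_neg at hno
      have hz : Set.EqOn (hfun f p x) (fun _ => (0:ℝ)) (Set.Ioi (u τ)) := by
        intro s hs
        have hsJ : s ∉ J f x := fun hsJ => absurd (hno s hsJ) (not_le.2 hs)
        have hzero : f (s • x) = 0 := f_eq_zero H fun hS => hsJ ⟨hupos.trans hs, hS⟩
        show s ^ (p-1) * f (s • x) = 0
        rw [hzero, mul_zero]
      have h0' : ∫ s in Set.Ioi (u τ), hfun f p x s = 0 := by
        rw [setIntegral_congr_fun measurableSet_Ioi hz]
        simp
      rw [h0'] at hmass
      rw [hΦueq] at hmass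
      nlinarith
    obtain ⟨t', ht'J, ht'g⟩ := hextJ
    exact ⟨hΦueq, hupos, mem_IJ_of_lt H ht'J hupos ht'g⟩
  -- monotonicity of u on Ioo 0 1
  have humono : ∀ s₁ ∈ Set.Ioo (0:ℝ) 1, ∀ s₂ ∈ Set.Ioo (0:ℝ) 1, s₁ < s₂ → u s₁ < u s₂ := by
    intro s₁ hs₁ s₂ hs₂ h12
    have h1 := (hmain s₁ hs₁).1
    have h2 := (hmain s₂ hs₂).1
    by_contra hle
    push_neg at hle
    have := hΦmono hle
    rw [h1, h2] at this
    nlinarith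
  -- continuity of u
  have hucont : ∀ τ ∈ Set.Ioo (0:ℝ) 1, ContinuousAt u τ := by
    intro τ hτ
    obtain ⟨hτ0, hτ1⟩ := hτ
    obtain ⟨hΦueq, hupos, huIJ⟩ := hmain τ ⟨hτ0, hτ1⟩
    rw [Metric.continuousAt_iff]
    intro ε hε
    set ε' := min (ε/2) (u τ/2) with hε'def
    have hε' : 0 < ε' := lt_min (by linarith) (by linarith)
    have hε'ε : ε' < ε := lt_of_le_of_lt (min_le_left _ _) (by linarith)
    -- Φ (u τ + ε') > τ P
    have hbddS2 : BddAbove {t | Φ t ≤ τ * P} := by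
      have hτP' : τ * P < P := by nlinarith
      obtain ⟨n, hn⟩ : ∃ n : ℕ, τ * P < Φ n :=
        (hlim.eventually (eventually_gt_nhds hτP')).exists
      refine ⟨n, fun t htm => ?_⟩
      by_contra hlt
      push_neg at hlt
      exact absurd (le_trans (hΦmono hlt.le) htm) (not_le.2 hn)
    have hup : τ * P < Φ (u τ + ε') := by
      rcases lt_or_ge (τ * P) (Φ (u τ + ε')) with h | h
      · exact h
      · exfalso
        have h2 : u τ + ε' ≤ u τ := le_csSup hbddS2 h
        linarith
    -- Φ (u τ - ε') < τ P
    have hdn : Φ (u τ - ε') < τ * P := by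
      have hle : Φ (u τ - ε') ≤ Φ (u τ) := hΦmono (by linarith)
      rcases lt_or_ge (Φ (u τ - ε')) (τ * P) with h | h
      · exact h
      · exfalso
        have heq : Φ (u τ - ε') = Φ (u τ) := le_antisymm hle (by rw [hΦueq]; exact h)
        have hpos0 : 0 < u τ - ε' := by
          have : ε' ≤ u τ/2 := min_le_right _ _
          linarith
        have hdiff := hΦdiff (u τ - ε') (u τ)
        rw [heq, sub_self] at hdiff
        have hioc : Set.Ioc (u τ - ε') (u τ) ⊆ IJ f x := by
          intro s hs
          rcases eq_or_lt_of_le hs.2 with hseq | hslt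
          · rw [hseq]; exact huIJ
          · exact mem_IJ_of_lt H (IJ_subset_J x huIJ) (hpos0.trans hs.1) hslt
        have hposint := integral_pos_on H hx (by linarith : u τ - ε' < u τ) hioc
        have hieq : ∫ s in (u τ - ε')..(u τ), g s
            = ∫ s in Set.Ioc (u τ - ε') (u τ), hfun f p x s := by
          rw [intervalIntegral.integral_of_le (by linarith : u τ - ε' ≤ u τ)]
          refine setIntegral_congr_fun measurableSet_Ioc fun s hs => ?_
          rw [hgdef, Set.indicator_of_mem (Set.mem_Ioi.2 (hpos0.trans hs.1))]
        rw [hieq] at hdiff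
        linarith
    set δ := min (min ((τ * P - Φ (u τ - ε'))/P) ((Φ (u τ + ε') - τ * P)/P)) (min τ (1 - τ)) with hδdef
    have hδpos : 0 < δ := by
      refine lt_min (lt_min ?_ ?_) (lt_min hτ0 (by linarith))
      · exact div_pos (by linarith) hP
      · exact div_pos (by linarith) hP
    refine ⟨δ/2, by linarith, fun s hsd => ?_⟩
    rw [Real.dist_eq] at hsd ⊢
    have habs := abs_lt.1 hsd
    have hsIoo : s ∈ Set.Ioo (0:ℝ) 1 := by
      constructor
      · have : δ ≤ τ := (min_le_right _ _).trans (min_le_left _ _)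
        linarith [habs.1]
      · have : δ ≤ 1 - τ := (min_le_right _ _).trans (min_le_right _ _)
        linarith [habs.2]
    obtain ⟨hΦs, hspos, hsIJ⟩ := hmain s hsIoo
    have hs_up : u s < u τ + ε' := by
      by_contra hcon
      push_neg at hcon
      have := hΦmono hcon
      rw [hΦs] at this
      have hd1 : δ ≤ (Φ (u τ + ε') - τ * P)/P := (min_le_left _ _).trans (min_le_right _ _)
      have hd1' : δ * P ≤ Φ (u τ + ε') - τ * P := (le_div_iff₀ hP).1 hd1
      nlinarith [habs.2, hP, hδpos]
    have hs_dn : u τ - ε' < u s := by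
      by_contra hcon
      push_neg at hcon
      have := hΦmono hcon
      rw [hΦs] at this
      have hd2 : δ ≤ (τ * P - Φ (u τ - ε'))/P := (min_le_left _ _).trans (min_le_left _ _)
      have hd2' : δ * P ≤ τ * P - Φ (u τ - ε') := (le_div_iff₀ hP).1 hd2
      nlinarith [habs.1, hP, hδpos]
    rw [abs_lt]
    constructor <;> nlinarith [hε'ε]
  -- the derivative
  refine ⟨u, fun τ hτ => ?_⟩
  obtain ⟨hΦueq, hupos, huIJ⟩ := hmain τ hτ
  refine ⟨huIJ, ?_⟩
  have hfu_pos : 0 < hfun f p x (u τ) := hfun_pos H huIJ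
  have hgu : g (u τ) = hfun f p x (u τ) := by
    rw [hgdef, Set.indicator_of_mem (Set.mem_Ioi.2 hupos)]
  have hgcont : ContinuousAt g (u τ) := by
    have hev : ∀ᶠ s in nhds (u τ), hfun f p x s = g s := by
      filter_upwards [isOpen_Ioi.mem_nhds (Set.mem_Ioi.2 hupos)] with s hs
      rw [hgdef, Set.indicator_of_mem hs]
    exact ContinuousAt.congr
      ((continuousOn_hfun H x).continuousAt ((isOpen_IJ x).mem_nhds huIJ)) hev
  have hΦderiv : HasDerivAt Φ (g (u τ)) (u τ) := by
    rw [hΦdef]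
    exact (intervalIntegral.integral_hasStrictDerivAt_right hgint.intervalIntegrable
      ⟨Set.univ, Filter.univ_mem, hgint.aestronglyMeasurable.restrict⟩ hgcont).hasDerivAt
  set G : ℝ → ℝ := fun y => u (y / P) with hGdef
  have hGτ : G (τ * P) = u τ := by
    rw [hGdef]
    simp only
    rw [mul_div_cancel_right₀ _ hP.ne']
  have hGcont : ContinuousAt G (τ * P) := by
    have h1 : ContinuousAt (fun y : ℝ => y / P) (τ * P) := by fun_prop
    have h3 : ContinuousAt u ((τ * P) / P) := by
      rw [mul_div_cancel_right₀ _ hP.ne']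
      exact hucont τ hτ
    exact ContinuousAt.comp (g := u) (f := fun y : ℝ => y / P) (x := τ * P) h3 h1
  have hev : ∀ᶠ y in nhds (τ * P), Φ (G y) = y := by
    have hoo : Set.Ioo (0:ℝ) P ∈ nhds (τ * P) := by
      refine isOpen_Ioo.mem_nhds ?_
      constructor
      · exact mul_pos hτ.1 hP
      · nlinarith [hτ.2, hP]
    filter_upwards [hoo] with y hy
    have hyP : y / P ∈ Set.Ioo (0:ℝ) 1 := by
      constructor
      · exact div_pos hy.1 hP
      · rw [div_lt_one hP]; exact hy.2
    have hyy := (hmain (y/P) hyP).1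
    rw [hGdef]
    simp only
    rw [hyy, div_mul_cancel₀ _ hP.ne']
  have hΦderiv' : HasDerivAt Φ (g (u τ)) (G (τ * P)) := by rw [hGτ]; exact hΦderiv
  have hGderiv : HasDerivAt G (g (u τ))⁻¹ (τ * P) :=
    HasDerivAt.of_local_left_inverse hGcont hΦderiv' (by rw [hgu]; exact hfu_pos.ne') hev
  have huderiv : HasDerivAt u ((g (u τ))⁻¹ * P) τ := by
    have hmul : HasDerivAt (fun τ' : ℝ => τ' * P) P τ := by
      simpa using (hasDerivAt_id τ).mul_const P
    have hcomp : HasDerivAt (fun τ' : ℝ => G (τ' * P)) ((g (u τ))⁻¹ * P) τ :=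
      HasDerivAt.comp (h := fun τ' : ℝ => τ' * P) τ hGderiv hmul
    have hfunext : (fun τ' : ℝ => G (τ' * P)) = u := by
      funext τ'
      rw [hGdef]
      simp only
      rw [mul_div_cancel_right₀ _ hP.ne']
    rwa [hfunext] at hcomp
  have hfin : (g (u τ))⁻¹ * P = P / hfun f p x (u τ) := by
    rw [hgu, div_eq_mul_inv, mul_comm]
  rwa [hfin] at huderiv

/-- The key inequality (Ball). -/
theorem key (H : Hyp k f p) {x y : EuclideanSpace ℝ (Fin k)} (hx : x ≠ 0) (hy : y ≠ 0)
    (hxy : x + y ≠ 0) :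
    I f p (x + y) ^ (-(1/p)) ≤ I f p x ^ (-(1/p)) + I f p y ^ (-(1/p)) := by
  obtain ⟨u, hu⟩ := exists_param H hx
  obtain ⟨v, hv⟩ := exists_param H hy
  have hp := H.hp
  set P := I f p x with hPdef
  set Q := I f p y with hQdef
  have hP : 0 < P := I_pos H hx
  have hQ : 0 < Q := I_pos H hy
  set c : ℝ := (P ^ (-(1/p)) + Q ^ (-(1/p)))⁻¹ with hcdef
  have hcpos : 0 < c :=
    inv_pos.2 (add_pos (Real.rpow_pos_of_pos hP _) (Real.rpow_pos_of_pos hQ _))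
  set t : ℝ → ℝ := fun τ => u τ * v τ / (u τ + v τ) with htdef
  set E : ℝ → ℝ := fun τ =>
    (P / hfun f p x (u τ) * (v τ)^2 + Q / hfun f p y (v τ) * (u τ)^2) / (u τ + v τ)^2
    with hEdef
  have hmain : ∀ τ ∈ Set.Ioo (0:ℝ) 1, HasDerivAt t (E τ) τ ∧ 0 < E τ ∧ 0 < t τ := by
    intro τ hτ
    obtain ⟨huIJ, hud⟩ := hu τ hτ
    obtain ⟨hvIJ, hvd⟩ := hv τ hτ
    have hupos : 0 < u τ := huIJ.1
    have hvpos : 0 < v τ := hvIJ.1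
    have hfux : 0 < hfun f p x (u τ) := hfun_pos H huIJ
    have hfvy : 0 < hfun f p y (v τ) := hfun_pos H hvIJ
    have hsumpos : 0 < u τ + v τ := by linarith
    have hsum : u τ + v τ ≠ 0 := hsumpos.ne'
    have hd1 : HasDerivAt (fun τ' => u τ' * v τ')
        (P / hfun f p x (u τ) * v τ + u τ * (Q / hfun f p y (v τ))) τ := hud.mul hvd
    have hd2 : HasDerivAt (fun τ' => u τ' + v τ')
        (P / hfun f p x (u τ) + Q / hfun f p y (v τ)) τ := hud.add hvd
    have hd3 := hd1.div hd2 hsum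
    refine ⟨?_, ?_, ?_⟩
    · rw [htdef]
      refine hd3.congr_deriv ?_
      rw [hEdef]
      field_simp
      ring
    · rw [hEdef]
      simp only
      refine div_pos (add_pos ?_ ?_) (pow_pos hsumpos 2)
      · exact mul_pos (div_pos hP hfux) (pow_pos hvpos 2)
      · exact mul_pos (div_pos hQ hfvy) (pow_pos hupos 2)
    · rw [htdef]
      simp only
      exact div_pos (mul_pos hupos hvpos) hsumpos
  have htcont : ContinuousOn t (Set.Ioo 0 1) := fun τ hτ =>
    ((hmain τ hτ).1.continuousAt).continuousWithinAt
  have htmono : StrictMonoOn t (Set.Ioo 0 1) := by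
    refine strictMonoOn_of_deriv_pos (convex_Ioo 0 1) htcont ?_
    intro τ hτ
    rw [interior_Ioo] at hτ
    rw [(hmain τ hτ).1.deriv]
    exact (hmain τ hτ).2.1
  have hinj : Set.InjOn t (Set.Ioo 0 1) := htmono.injOn
  have hderivW : ∀ τ ∈ Set.Ioo (0:ℝ) 1, HasDerivWithinAt t (E τ) (Set.Ioo 0 1) τ :=
    fun τ hτ => ((hmain τ hτ).1).hasDerivWithinAt
  set w := hfun f p (x + y) with hwdef
  have hiw := integrableOn_hfun H hxy
  have himage_sub : t '' (Set.Ioo 0 1) ⊆ Set.Ioi (0:ℝ) := by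
    rintro s ⟨τ, hτ, rfl⟩
    exact (hmain τ hτ).2.2
  have hCOV := MeasureTheory.integral_image_eq_integral_abs_deriv_smul measurableSet_Ioo
    hderivW hinj w
  -- the pointwise bound
  have hpt : ∀ τ ∈ Set.Ioo (0:ℝ) 1, c ^ p ≤ |E τ| • w (t τ) := by
    intro τ hτ
    obtain ⟨huIJ, -⟩ := hu τ hτ
    obtain ⟨hvIJ, -⟩ := hv τ hτ
    obtain ⟨-, hEpos, httpos⟩ := hmain τ hτ
    rw [smul_eq_mul, abs_of_pos hEpos]
    have hupos : 0 < u τ := huIJ.1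
    have hvpos : 0 < v τ := hvIJ.1
    have hα : 0 < f (u τ • x) := mem_S_iff.1 (interior_subset huIJ.2)
    have hβ : 0 < f (v τ • y) := mem_S_iff.1 (interior_subset hvIJ.2)
    have hfux : 0 < hfun f p x (u τ) := hfun_pos H huIJ
    have hfvy : 0 < hfun f p y (v τ) := hfun_pos H hvIJ
    have hsumpos : 0 < u τ + v τ := by linarith
    set a := u τ with hadef
    set b := v τ with hbdef
    set α := f (a • x) with hαdef
    set β := f (b • y) with hβdef
    set A := hfun f p x a with hAdef
    have hAeq : A = a ^ (p-1) * α := rfl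
    set B := hfun f p y b with hBdef
    have hBeq : B = b ^ (p-1) * β := rfl
    set θ := b / (a + b) with hθdef
    have hθ0 : 0 < θ := div_pos hvpos hsumpos
    have hθ1 : θ < 1 := (div_lt_one hsumpos).2 (by linarith)
    have h1mθpos : 0 < 1 - θ := by linarith
    have hθa : θ * a = t τ := by
      rw [hθdef, htdef]
      show b / (a + b) * a = a * b / (a + b)
      field_simp
    have h1mθb : (1 - θ) * b = t τ := by
      rw [hθdef, htdef]
      show (1 - b / (a + b)) * b = a * b / (a + b)
      field_simp
      ring
    -- log-concavity step
    have hcomb : (t τ) • (x + y) = θ • (a • x) + (1 - θ) • (b • y) := by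
      rw [smul_add, smul_smul, smul_smul, mul_comm θ a, mul_comm (1-θ) b]
      rw [mul_comm a θ, hθa, mul_comm b (1-θ), h1mθb]
    have haS : a • x ∈ S f := mem_S_iff.2 hα
    have hbS : b • y ∈ S f := mem_S_iff.2 hβ
    have hlog := H.hlc.2 haS hbS hθ0.le h1mθpos.le (by ring)
    have hcombS : θ • (a • x) + (1 - θ) • (b • y) ∈ S f :=
      H.convexS haS hbS hθ0.le h1mθpos.le (by ring)
    have hfcomb : α ^ θ * β ^ (1 - θ) ≤ f (t τ • (x + y)) := by
      rw [hcomb]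
      have hfpos2 : 0 < f (θ • (a • x) + (1 - θ) • (b • y)) := mem_S_iff.1 hcombS
      have e1 : α ^ θ * β ^ (1-θ)
          = Real.exp (Real.log α * θ) * Real.exp (Real.log β * (1-θ)) := by
        rw [Real.rpow_def_of_pos hα, Real.rpow_def_of_pos hβ]
      rw [e1, ← Real.exp_add, ← Real.exp_log hfpos2]
      apply Real.exp_le_exp.2
      simp only [smul_eq_mul] at hlog
      linarith
    have h_w_ge : t τ ^ (p-1) * (α ^ θ * β ^ (1-θ)) ≤ w (t τ) := by
      have : w (t τ) = t τ ^ (p-1) * f (t τ • (x + y)) := rfl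
      rw [this]
      exact mul_le_mul_of_nonneg_left hfcomb (Real.rpow_nonneg httpos.le _)
    -- AM-GM for E
    have hE_eq : E τ = t τ^2 * (P/(a^2*A) + Q/(b^2*B)) := by
      rw [hEdef, htdef]
      simp only
      rw [← hadef, ← hbdef, ← hAdef, ← hBdef]
      field_simp
    have hq1pos : 0 < P/(t τ * a * A) := div_pos hP (by positivity)
    have hq2pos : 0 < Q/(t τ * b * B) := div_pos hQ (by positivity)
    have hqsum : (P/(t τ * a * A))^θ * (Q/(t τ * b * B))^(1-θ) ≤ P/(a^2*A) + Q/(b^2*B) := by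
      have h1 := Real.geom_mean_le_arith_mean2_weighted hθ0.le h1mθpos.le
        hq1pos.le hq2pos.le (by ring)
      have e1 : θ * (P/(t τ * a * A)) = P/(a^2*A) := by
        rw [← hθa]
        field_simp
      have e2 : (1-θ) * (Q/(t τ * b * B)) = Q/(b^2*B) := by
        rw [← h1mθb]
        field_simp
      rw [e1, e2] at h1
      exact h1
    have hEw1 : t τ^2 * ((P/(t τ * a * A))^θ * (Q/(t τ * b * B))^(1-θ))
        * (t τ ^ (p-1) * (α ^ θ * β ^ (1-θ))) ≤ E τ * w (t τ) := by
      rw [hE_eq]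
      have hnn1 : 0 ≤ t τ^2 * ((P/(t τ * a * A))^θ * (Q/(t τ * b * B))^(1-θ)) := by positivity
      have hnn2 : 0 ≤ t τ ^ (p-1) * (α ^ θ * β ^ (1-θ)) := by positivity
      refine mul_le_mul ?_ h_w_ge hnn2 ?_
      · exact mul_le_mul_of_nonneg_left hqsum (sq_nonneg _)
      · positivity
    -- identities
    set X := P ^ (1/p) / a with hXdef
    set Y := Q ^ (1/p) / b with hYdef
    have hX : 0 < X := div_pos (Real.rpow_pos_of_pos hP _) hupos
    have hY : 0 < Y := div_pos (Real.rpow_pos_of_pos hQ _) hvpos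
    have hap : a * a ^ (p-1) = a ^ p := by
      nth_rewrite 1 [← Real.rpow_one a]
      rw [← Real.rpow_add hupos]
      norm_num
    have hbp : b * b ^ (p-1) = b ^ p := by
      nth_rewrite 1 [← Real.rpow_one b]
      rw [← Real.rpow_add hvpos]
      norm_num
    have hXp : X ^ p = P / a ^ p := by
      rw [hXdef, Real.div_rpow (Real.rpow_nonneg hP.le _) hupos.le,
        ← Real.rpow_mul hP.le, one_div, inv_mul_cancel₀ hp.ne', Real.rpow_one]
    have hYp : Y ^ p = Q / b ^ p := by
      rw [hYdef, Real.div_rpow (Real.rpow_nonneg hQ.le _) hvpos.le,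
        ← Real.rpow_mul hQ.le, one_div, inv_mul_cancel₀ hp.ne', Real.rpow_one]
    have i1 : (P/(t τ * a * A))^θ * α ^ θ = (X ^ p / t τ) ^ θ := by
      rw [← Real.mul_rpow hq1pos.le hα.le]
      congr 1
      rw [hXp, hAeq, div_mul_eq_mul_div, div_div,
        div_eq_div_iff (by positivity) (by positivity), ← hap]
      ring
    have i2 : (Q/(t τ * b * B))^(1-θ) * β ^ (1-θ) = (Y ^ p / t τ) ^ (1-θ) := by
      rw [← Real.mul_rpow hq2pos.le hβ.le]
      congr 1
      rw [hYp, hBeq, div_mul_eq_mul_div, div_div,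
        div_eq_div_iff (by positivity) (by positivity), ← hbp]
      ring
    have hXpt : 0 < X ^ p / t τ := div_pos (Real.rpow_pos_of_pos hX _) httpos
    have hYpt : 0 < Y ^ p / t τ := div_pos (Real.rpow_pos_of_pos hY _) httpos
    have i4 : (X ^ p / t τ) ^ θ * (Y ^ p / t τ) ^ (1-θ)
        = (X ^ θ * Y ^ (1-θ)) ^ p * (t τ)⁻¹ := by
      rw [Real.div_rpow (Real.rpow_nonneg hX.le _) httpos.le,
        Real.div_rpow (Real.rpow_nonneg hY.le _) httpos.le]
      rw [← Real.rpow_mul hX.le, ← Real.rpow_mul hY.le, mul_comm p θ, mul_comm p (1-θ),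
        Real.rpow_mul hX.le, Real.rpow_mul hY.le]
      rw [div_mul_div_comm, ← Real.mul_rpow (Real.rpow_nonneg hX.le _) (Real.rpow_nonneg hY.le _)]
      rw [← Real.rpow_add httpos, show θ + (1-θ) = (1:ℝ) by ring, Real.rpow_one]
      rw [div_eq_mul_inv]
    -- assemble the lower bound
    have hbig : (t τ * (X ^ θ * Y ^ (1-θ))) ^ p
        ≤ t τ^2 * ((P/(t τ * a * A))^θ * (Q/(t τ * b * B))^(1-θ))
          * (t τ ^ (p-1) * (α ^ θ * β ^ (1-θ))) := by
      have e3 : t τ^2 * ((P/(t τ * a * A))^θ * (Q/(t τ * b * B))^(1-θ))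
          * (t τ ^ (p-1) * (α ^ θ * β ^ (1-θ)))
          = ((P/(t τ * a * A))^θ * α ^ θ) * ((Q/(t τ * b * B))^(1-θ) * β ^ (1-θ))
            * (t τ^2 * t τ ^ (p-1)) := by ring
      rw [e3, i1, i2, i4]
      have e4 : (X ^ θ * Y ^ (1-θ)) ^ p * (t τ)⁻¹ * (t τ^2 * t τ ^ (p-1))
          = (X ^ θ * Y ^ (1-θ)) ^ p * (t τ * t τ ^ (p-1)) := by
        field_simp
      have htp : t τ * t τ ^ (p-1) = t τ ^ p := by
        nth_rewrite 1 [← Real.rpow_one (t τ)]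
        rw [← Real.rpow_add httpos]
        norm_num
      rw [e4, htp, ← Real.mul_rpow (mul_nonneg (Real.rpow_nonneg hX.le _)
        (Real.rpow_nonneg hY.le _)) httpos.le]
      rw [mul_comm (X ^ θ * Y ^ (1-θ)) (t τ)]
    -- harmonic bound
    have hharm : c ≤ t τ * (X ^ θ * Y ^ (1-θ)) := by
      have hXinv : X⁻¹ = a * P ^ (-(1/p)) := by
        rw [hXdef, Real.rpow_neg hP.le]
        field_simp
      have hYinv : Y⁻¹ = b * Q ^ (-(1/p)) := by
        rw [hYdef, Real.rpow_neg hQ.le]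
        field_simp
      have hGM := Real.geom_mean_le_arith_mean2_weighted hθ0.le h1mθpos.le
        (inv_nonneg.2 hX.le) (inv_nonneg.2 hY.le) (by ring)
      have eL : (X⁻¹) ^ θ * (Y⁻¹) ^ (1-θ) = (X ^ θ * Y ^ (1-θ))⁻¹ := by
        rw [Real.inv_rpow hX.le, Real.inv_rpow hY.le, ← mul_inv]
      have eR : θ * X⁻¹ + (1-θ) * Y⁻¹ = t τ * c⁻¹ := by
        rw [hXinv, hYinv, hcdef, inv_inv]
        have : θ * (a * P ^ (-(1/p))) + (1-θ) * (b * Q ^ (-(1/p)))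
            = (θ * a) * P ^ (-(1/p)) + ((1-θ) * b) * Q ^ (-(1/p)) := by ring
        rw [this, hθa, h1mθb]
        ring
      rw [eL, eR] at hGM
      set Z := X ^ θ * Y ^ (1-θ) with hZdef
      have hZ : 0 < Z := mul_pos (Real.rpow_pos_of_pos hX _) (Real.rpow_pos_of_pos hY _)
      have h3 := mul_le_mul_of_nonneg_left hGM hcpos.le
      rw [mul_comm (t τ) c⁻¹, ← mul_assoc, mul_inv_cancel₀ hcpos.ne', one_mul] at h3
      calc c = c * Z⁻¹ * Z := by field_simp
        _ ≤ t τ * Z := mul_le_mul_of_nonneg_right h3 hZ.le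
    have hfinal : c ^ p ≤ (t τ * (X ^ θ * Y ^ (1-θ))) ^ p :=
      Real.rpow_le_rpow hcpos.le hharm hp.le
    calc c ^ p ≤ (t τ * (X ^ θ * Y ^ (1-θ))) ^ p := hfinal
      _ ≤ t τ^2 * ((P/(t τ * a * A))^θ * (Q/(t τ * b * B))^(1-θ))
          * (t τ ^ (p-1) * (α ^ θ * β ^ (1-θ))) := hbig
      _ ≤ E τ * w (t τ) := hEw1
  -- integrability of the transported integrand
  have hint2 : IntegrableOn (fun τ => |E τ| • w (t τ)) (Set.Ioo 0 1) := by
    rw [← MeasureTheory.integrableOn_image_iff_integrableOn_abs_deriv_smul measurableSet_Ioo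
      hderivW hinj w]
    exact hiw.mono_set himage_sub
  -- conclusion chain
  have h1 : c ^ p ≤ ∫ τ in Set.Ioo (0:ℝ) 1, |E τ| • w (t τ) := by
    have h2 : (∫ _ in Set.Ioo (0:ℝ) 1, c ^ p) ≤ ∫ τ in Set.Ioo (0:ℝ) 1, |E τ| • w (t τ) := by
      refine setIntegral_mono_on ?_ hint2 measurableSet_Ioo hpt
      exact integrableOn_const (by rw [Real.volume_Ioo]; exact ENNReal.ofReal_ne_top)
    rw [setIntegral_const] at h2
    rw [Real.volume_real_Ioo] at h2
    norm_num at h2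
    exact h2
  have h3 : ∫ τ in Set.Ioo (0:ℝ) 1, |E τ| • w (t τ) ≤ I f p (x + y) := by
    rw [← hCOV]
    refine setIntegral_mono_set hiw ?_ (HasSubset.Subset.eventuallyLE himage_sub)
    filter_upwards [ae_restrict_mem measurableSet_Ioi] with s hs
    exact hfun_nonneg H _ hs
  have hIz : c ^ p ≤ I f p (x + y) := le_trans h1 h3
  have hczp : 0 < c ^ p := Real.rpow_pos_of_pos hcpos p
  have h5 : I f p (x+y) ^ (-(1/p)) ≤ (c ^ p) ^ (-(1/p)) :=
    Real.rpow_le_rpow_of_nonpos hczp hIz (neg_nonpos.2 (by positivity))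
  have h6 : (c ^ p) ^ (-(1/p)) = c⁻¹ := by
    rw [← Real.rpow_mul hcpos.le, show p * -(1/p) = -1 by field_simp, Real.rpow_neg_one]
  rw [h6, hcdef, inv_inv] at h5
  exact h5

end

end BallBodiesAux

open MeasureTheory Classical in

/-- Ball's construction: for a log-concave integrable `f : ℝᵏ → ℝ₊` with `0` in the
interior of its support and `p > 0`, the function
`x ↦ (∫₀^∞ t^{p-1} f(tx) dt)^{-1/p}` (extended by `0` at the origin) is nonnegative,
positively homogeneous and convex, i.e. it is the Minkowski functional of a convex body
`L_p(f)` with `0` in its interior. -/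
theorem ball_bodies (k : ℕ) (hk : 1 ≤ k) (f : EuclideanSpace ℝ (Fin k) → ℝ)
    (hf0 : ∀ x, 0 ≤ f x) (hfint : Integrable f)
    (h0 : (0 : EuclideanSpace ℝ (Fin k)) ∈ interior {x | 0 < f x})
    (hlc : ConcaveOn ℝ {x | 0 < f x} (fun x => Real.log (f x))) (p : ℝ) (hp : 0 < p) :
    letI N : EuclideanSpace ℝ (Fin k) → ℝ := fun x =>
      if x = 0 then 0 else (∫ t in Set.Ioi (0:ℝ), t ^ (p - 1) * f (t • x)) ^ (-(1 / p))
    (∀ x, 0 ≤ N x) ∧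
      (∀ (c : ℝ) (x : EuclideanSpace ℝ (Fin k)), 0 < c → N (c • x) = c * N x) ∧
      ConvexOn ℝ Set.univ N := by
  have H : BallBodiesAux.Hyp k f p := ⟨hk, hf0, hfint, h0, hlc, hp⟩
  set N : EuclideanSpace ℝ (Fin k) → ℝ := fun x =>
    if x = 0 then 0 else (∫ t in Set.Ioi (0:ℝ), t ^ (p - 1) * f (t • x)) ^ (-(1 / p))
    with hNdef
  have hIeq : ∀ x : EuclideanSpace ℝ (Fin k), x ≠ 0 →
      N x = BallBodiesAux.I f p x ^ (-(1 / p)) := by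
    intro x hx
    rw [hNdef]
    simp only
    rw [if_neg hx]
    rfl
  have hN0 : N 0 = 0 := by rw [hNdef]; simp
  have hNnn : ∀ x, 0 ≤ N x := by
    intro x
    by_cases hx : x = 0
    · rw [hx, hN0]
    · rw [hIeq x hx]
      exact Real.rpow_nonneg (BallBodiesAux.I_nonneg H x) _
  have hNhom : ∀ (c : ℝ) (x : EuclideanSpace ℝ (Fin k)), 0 < c → N (c • x) = c * N x := by
    intro c x hc
    by_cases hx : x = 0
    · rw [hx, smul_zero, hN0, mul_zero]
    · have hcx : c • x ≠ 0 := smul_ne_zero hc.ne' hx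
      rw [hIeq _ hcx, hIeq _ hx, BallBodiesAux.I_smul H hx hc,
        Real.mul_rpow (Real.rpow_nonneg hc.le _) (BallBodiesAux.I_nonneg H x),
        ← Real.rpow_mul hc.le,
        show -p * -(1/p) = 1 by field_simp, Real.rpow_one]
  refine ⟨hNnn, hNhom, convex_univ, ?_⟩
  intro x _ y _ a b ha hb hab
  simp only [smul_eq_mul]
  rcases eq_or_lt_of_le ha with haz | hapos
  · have hb1 : b = 1 := by linarith
    rw [← haz, hb1]
    simp
  rcases eq_or_lt_of_le hb with hbz | hbpos
  · have ha1 : a = 1 := by linarith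
    rw [← hbz, ha1]
    simp
  by_cases hx0 : x = 0
  · rw [hx0, smul_zero, zero_add, hN0, mul_zero, zero_add, hNhom b y hbpos]
  by_cases hy0 : y = 0
  · rw [hy0, smul_zero, add_zero, hN0, mul_zero, add_zero, hNhom a x hapos]
  have hx' : a • x ≠ 0 := smul_ne_zero hapos.ne' hx0
  have hy' : b • y ≠ 0 := smul_ne_zero hbpos.ne' hy0
  by_cases hs : a • x + b • y = 0
  · rw [hs, hN0]
    exact add_nonneg (mul_nonneg hapos.le (hNnn x)) (mul_nonneg hbpos.le (hNnn y))
  · have hk1 := BallBodiesAux.key H hx' hy' hs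
    rw [hIeq _ hs]
    calc (BallBodiesAux.I f p (a • x + b • y)) ^ (-(1/p))
        ≤ BallBodiesAux.I f p (a • x) ^ (-(1/p)) + BallBodiesAux.I f p (b • y) ^ (-(1/p)) := hk1
      _ = N (a • x) + N (b • y) := by rw [hIeq _ hx', hIeq _ hy']
      _ = a * N x + b * N y := by rw [hNhom a x hapos, hNhom b y hbpos]
end

section
/- Let f : ℝᵏ → ℝ₊ be a log-concave integrable function with 0 in the interior of its support such that ∫_{ℝᵏ} ⟨x,u⟩ f(x) dx = 0 for all u ∈ ℝᵏ. Then the centroid of the convex body L_{k+1}(f) is at the origin. -/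
open MeasureTheory
open scoped RealInnerProductSpace

section CentroidAuxSection

open Set Metric Filter
open scoped ENNReal NNReal Topology

namespace CentroidAux


/-- 1-D integrability of `t^j * exp(-c t)` on `(0,∞)`. -/
lemma intOn_pow_exp (j : ℕ) {c : ℝ} (hc : 0 < c) :
    IntegrableOn (fun t : ℝ => t ^ j * Real.exp (-c * t)) (Set.Ioi 0) := by
  have h := integrableOn_rpow_mul_exp_neg_mul_rpow (s := (j : ℝ)) (p := 1)
    (by exact_mod_cast neg_one_lt_zero.trans_le (Nat.cast_nonneg j)) one_pos hc
  refine h.congr_fun (fun x hx => ?_) measurableSet_Ioi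
  beta_reduce
  rw [Real.rpow_natCast, Real.rpow_one]

variable {E : Type*} [NormedAddCommGroup E] [NormedSpace ℝ E] [MeasurableSpace E]
  [BorelSpace E] [FiniteDimensional ℝ E] [Nontrivial E]
variable (μ : Measure E) [μ.IsAddHaarMeasure]

/-- Polar coordinates: Bochner integral version. -/
lemma polar_integral {V : Type*} [NormedAddCommGroup V] [NormedSpace ℝ V]
    (G : E → V) (hG : Integrable G μ) :
    ∫ x, G x ∂μ = ∫ θ : sphere (0:E) 1,
      (∫ r in Set.Ioi (0:ℝ), r ^ (Module.finrank ℝ E - 1) • G (r • (θ : E))) ∂μ.toSphere := by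
  set n := Module.finrank ℝ E with hn
  set H : sphere (0:E) 1 × Ioi (0:ℝ) → V :=
    fun p => G ((((homeomorphUnitSphereProd E).symm p : ({0}ᶜ : Set E)) : E)) with hH
  have hcomp : ∀ x : ({0}ᶜ : Set E), H (homeomorphUnitSphereProd E x) = G x := by
    intro x; rw [hH]; simp
  have hHint : Integrable H (μ.toSphere.prod (Measure.volumeIoiPow (n - 1))) := by
    rw [← (μ.measurePreserving_homeomorphUnitSphereProd.integrable_comp_emb
      (Homeomorph.measurableEmbedding _))]
    have h1 : (H ∘ (homeomorphUnitSphereProd E)) = fun x : ({0}ᶜ : Set E) => G x := by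
      funext x; exact hcomp x
    rw [h1]
    have hmap : Measure.map Subtype.val (μ.comap (Subtype.val :
        ({0}ᶜ : Set E) → E)) = μ.restrict {(0:E)}ᶜ := by
      rw [(MeasurableEmbedding.subtype_coe
        (measurableSet_singleton (0:E)).compl).map_comap, Subtype.range_coe]
    have h2 := (MeasurableEmbedding.subtype_coe
      (measurableSet_singleton (0:E)).compl).integrable_map_iff
      (μ := μ.comap (Subtype.val : ({0}ᶜ : Set E) → E)) (g := G)
    rw [hmap] at h2
    exact h2.mp hG.integrableOn
  calc ∫ x, G x ∂μ = ∫ x in {(0:E)}ᶜ, G x ∂μ := by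
        rw [restrict_compl_singleton]
    _ = ∫ x : ({0}ᶜ : Set E), G x ∂(μ.comap Subtype.val) :=
        (integral_subtype_comap (measurableSet_singleton (0:E)).compl _).symm
    _ = ∫ x : ({0}ᶜ : Set E), H (homeomorphUnitSphereProd E x) ∂(μ.comap Subtype.val) :=
        integral_congr_ae (Eventually.of_forall fun x => (hcomp x).symm)
    _ = ∫ p, H p ∂(μ.toSphere.prod (Measure.volumeIoiPow (n - 1))) :=
        μ.measurePreserving_homeomorphUnitSphereProd.integral_comp
          (Homeomorph.measurableEmbedding _) H
    _ = ∫ θ : sphere (0:E) 1, (∫ r : Ioi (0:ℝ), H (θ, r) ∂(Measure.volumeIoiPow (n-1)))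
          ∂μ.toSphere := integral_prod H hHint
    _ = _ := by
        refine integral_congr_ae (Eventually.of_forall fun θ => ?_)
        have hsymm : ∀ r : Ioi (0:ℝ), H (θ, r) = G ((r : ℝ) • (θ : E)) := by
          intro r; rw [hH]; simp
        have step1 : ∫ r : Ioi (0:ℝ), H (θ, r) ∂(Measure.volumeIoiPow (n-1))
            = ∫ r : Ioi (0:ℝ), Real.toNNReal ((r:ℝ) ^ (n-1)) • G ((r:ℝ) • (θ:E))
              ∂(Measure.comap Subtype.val volume) := by
          simp only [Measure.volumeIoiPow, ENNReal.ofReal]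
          rw [integral_withDensity_eq_integral_smul
            (by measurability : Measurable fun r : Ioi (0:ℝ) => Real.toNNReal ((r:ℝ) ^ (n-1)))]
          exact integral_congr_ae (Eventually.of_forall fun r =>
            congrArg (fun v => Real.toNNReal ((r:ℝ) ^ (n-1)) • v) (hsymm r))
        show ∫ r : Ioi (0:ℝ), H (θ, r) ∂(Measure.volumeIoiPow (n-1))
          = ∫ r in Set.Ioi (0:ℝ), r ^ (n - 1) • G (r • (θ : E))
        rw [step1, integral_subtype_comap measurableSet_Ioi
          (fun r : ℝ => Real.toNNReal (r ^ (n-1)) • G (r • (θ:E)))]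
        refine setIntegral_congr_fun measurableSet_Ioi fun r hr => ?_
        rw [NNReal.smul_def, Real.coe_toNNReal _ (pow_nonneg (le_of_lt hr) _)]

/-- Polar coordinates: lintegral version. -/
lemma polar_lintegral (H : E → ℝ≥0∞) (hH : Measurable H) :
    ∫⁻ x, H x ∂μ = ∫⁻ θ : sphere (0:E) 1,
      (∫⁻ r in Set.Ioi (0:ℝ), ENNReal.ofReal (r ^ (Module.finrank ℝ E - 1)) * H (r • (θ : E)))
        ∂μ.toSphere := by
  set n := Module.finrank ℝ E with hn
  set H' : sphere (0:E) 1 × Ioi (0:ℝ) → ℝ≥0∞ :=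
    fun p => H ((((homeomorphUnitSphereProd E).symm p : ({0}ᶜ : Set E)) : E)) with hH'
  have hH'm : Measurable H' := by
    apply hH.comp
    exact (continuous_subtype_val.comp
      (homeomorphUnitSphereProd E).symm.continuous).measurable
  have hcomp : ∀ x : ({0}ᶜ : Set E), H' (homeomorphUnitSphereProd E x) = H x := by
    intro x; rw [hH']; simp
  calc ∫⁻ x, H x ∂μ = ∫⁻ x in {(0:E)}ᶜ, H x ∂μ := by rw [restrict_compl_singleton]
    _ = ∫⁻ x : ({0}ᶜ : Set E), H x ∂(μ.comap Subtype.val) :=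
        (lintegral_subtype_comap (measurableSet_singleton (0:E)).compl _).symm
    _ = ∫⁻ x : ({0}ᶜ : Set E), H' (homeomorphUnitSphereProd E x) ∂(μ.comap Subtype.val) :=
        lintegral_congr fun x => (hcomp x).symm
    _ = ∫⁻ p, H' p ∂(μ.toSphere.prod (Measure.volumeIoiPow (n - 1))) :=
        μ.measurePreserving_homeomorphUnitSphereProd.lintegral_comp_emb
          (Homeomorph.measurableEmbedding _) H'
    _ = ∫⁻ θ : sphere (0:E) 1, (∫⁻ r : Ioi (0:ℝ), H' (θ, r) ∂(Measure.volumeIoiPow (n-1)))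
          ∂μ.toSphere := lintegral_prod H' hH'm.aemeasurable
    _ = _ := by
        refine lintegral_congr fun θ => ?_
        show ∫⁻ r : Ioi (0:ℝ), H' (θ, r) ∂(Measure.volumeIoiPow (n-1))
          = ∫⁻ r in Set.Ioi (0:ℝ), ENNReal.ofReal (r ^ (n - 1)) * H (r • (θ : E))
        have step1 : ∫⁻ r : Ioi (0:ℝ), H' (θ, r) ∂(Measure.volumeIoiPow (n-1))
            = ∫⁻ r : Ioi (0:ℝ), ENNReal.ofReal ((r:ℝ) ^ (n-1)) * H ((r:ℝ) • (θ:E))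
              ∂(Measure.comap Subtype.val volume) := by
          rw [Measure.volumeIoiPow, lintegral_withDensity_eq_lintegral_mul _
            (by measurability : Measurable fun r : Ioi (0:ℝ) => ENNReal.ofReal ((r:ℝ) ^ (n-1)))
            (by exact hH'm.comp measurable_prodMk_left :
              Measurable fun r : Ioi (0:ℝ) => H' (θ, r))]
          refine lintegral_congr fun r => ?_
          have h3 : H' (θ, r) = H ((r:ℝ) • (θ:E)) := by rw [hH']; simp
          simp only [Pi.mul_apply, h3]
        rw [step1, lintegral_subtype_comap measurableSet_Ioi
          (fun r : ℝ => ENNReal.ofReal (r ^ (n-1)) * H (r • (θ:E)))]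




variable {E : Type*} [NormedAddCommGroup E] [NormedSpace ℝ E] [MeasurableSpace E]
  [BorelSpace E] [FiniteDimensional ℝ E] [Nontrivial E]
variable (μ : Measure E) [μ.IsAddHaarMeasure]

private lemma logmono {a b : ℝ} (ha : 0 < a) (hab : a ≤ b) : Real.log a ≤ Real.log b :=
  (Real.log_le_log_iff ha (ha.trans_le hab)).2 hab

set_option maxHeartbeats 1000000 in
/-- A nonnegative, integrable, log-concave function positive near `0` decays exponentially. -/
lemma exp_decay (f : E → ℝ) (hf0 : ∀ x, 0 ≤ f x) (hfint : Integrable f μ)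
    (h0 : (0:E) ∈ interior {x | 0 < f x})
    (hlc : ConcaveOn ℝ {x | 0 < f x} (fun x => Real.log (f x))) :
    ∃ C c : ℝ, 0 < c ∧ ∀ x, f x ≤ C * Real.exp (-c * ‖x‖) := by
  set S := {x : E | 0 < f x} with hSdef
  have hSconv : Convex ℝ S := hlc.1
  have hS0 : ∀ x, x ∉ S → f x = 0 := fun x hx => le_antisymm (not_lt.1 hx) (hf0 x)
  -- the multiplicative midpoint inequality
  have hmid : ∀ x ∈ S, ∀ y ∈ S,
      Real.sqrt (f x * f y) ≤ f ((1/2 : ℝ) • x + (1/2 : ℝ) • y) := by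
    intro x hx y hy
    have hfx : 0 < f x := hx
    have hfy : 0 < f y := hy
    have hz : ((1/2:ℝ) • x + (1/2:ℝ) • y) ∈ S :=
      hSconv hx hy (by norm_num) (by norm_num) (by norm_num)
    have hcon := hlc.2 hx hy (by norm_num : (0:ℝ) ≤ 1/2) (by norm_num : (0:ℝ) ≤ 1/2)
      (by norm_num)
    simp only [smul_eq_mul] at hcon
    have hfz : 0 < f ((1/2:ℝ) • x + (1/2:ℝ) • y) := hz
    have hlog : Real.log (Real.sqrt (f x * f y))
        ≤ Real.log (f ((1/2:ℝ) • x + (1/2:ℝ) • y)) := by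
      rw [Real.log_sqrt (by positivity), Real.log_mul (ne_of_gt hfx) (ne_of_gt hfy)]
      linarith
    exact (Real.log_le_log_iff (Real.sqrt_pos.2 (by positivity)) hfz).1 hlog
  -- step 1 : a positive lower bound near 0
  have h0S : (0:E) ∈ S := interior_subset h0
  have hf0pos : 0 < f 0 := h0S
  have hφcont : ContinuousAt (fun x => Real.log (f x)) 0 :=
    (hlc.continuousOn_interior 0 h0).continuousAt (isOpen_interior.mem_nhds h0)
  have hnear : {x : E | Real.log (f 0) - 1 < Real.log (f x)} ∈ 𝓝 (0:E) :=
    hφcont (Ioi_mem_nhds (sub_one_lt _))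
  obtain ⟨ε₁, hε₁, hball₁⟩ := Metric.mem_nhds_iff.1
    (inter_mem hnear (isOpen_interior.mem_nhds h0))
  set ε := ε₁ / 2 with hεdef
  have hε : 0 < ε := by positivity
  set m := Real.exp (Real.log (f 0) - 1) with hmdef
  have hm : 0 < m := Real.exp_pos _
  have hfm : ∀ x : E, ‖x‖ ≤ ε → m ≤ f x := by
    intro x hx
    have hxb : x ∈ ball (0:E) ε₁ := by rw [mem_ball_zero_iff]; linarith
    obtain ⟨h1, h2⟩ := hball₁ hxb
    have hfx : (0:ℝ) < f x := (interior_subset h2 : x ∈ S)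
    calc m ≤ Real.exp (Real.log (f x)) := Real.exp_le_exp.2 (le_of_lt h1)
      _ = f x := Real.exp_log hfx
  have hSm : ∀ x : E, ‖x‖ ≤ ε → x ∈ S := fun x hx => lt_of_lt_of_le hm (hfm x hx)
  have hf0m : m ≤ f 0 := hfm 0 (by simp [le_of_lt hε])
  -- step 2 : a global upper bound
  set I := ∫ x, f x ∂μ with hIdef
  have hI0 : 0 ≤ I := integral_nonneg hf0
  set V := (μ (ball (0:E) (ε/2))).toReal with hVdef
  have hVpos : 0 < V :=
    ENNReal.toReal_pos (measure_ball_pos μ 0 (by positivity)).ne' measure_ball_lt_top.ne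
  have hballest : ∀ x ∈ S, Real.sqrt (m * f x) * V ≤ I := by
    intro x hxS
    have hfx : 0 < f x := hxS
    have hsub : ∀ y ∈ ball ((1/2:ℝ) • x) (ε/2), Real.sqrt (m * f x) ≤ f y := by
      intro y hy
      set b := (2:ℝ) • y - x with hbdef
      have hyb : y = (1/2:ℝ) • x + (1/2:ℝ) • b := by rw [hbdef]; module
      have hbnorm : ‖b‖ ≤ ε := by
        have hb2 : b = (2:ℝ) • (y - (1/2:ℝ) • x) := by rw [hbdef]; module
        have hyd : ‖y - (1/2:ℝ) • x‖ < ε/2 := mem_ball_iff_norm.1 hy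
        rw [hb2, norm_smul]
        simp only [Real.norm_ofNat]
        linarith
      have hbS : b ∈ S := hSm b hbnorm
      have hmle := hmid x hxS b hbS
      rw [← hyb] at hmle
      refine le_trans (Real.sqrt_le_sqrt ?_) hmle
      have := hfm b hbnorm
      nlinarith
    have h1 := setIntegral_ge_of_const_le (μ := μ) measurableSet_ball
      measure_ball_lt_top.ne hsub hfint.integrableOn
    have h2 : ∫ y in ball ((1/2:ℝ) • x) (ε/2), f y ∂μ ≤ I :=
      setIntegral_le_integral hfint (Eventually.of_forall hf0)
    have h3 : (μ (ball ((1/2:ℝ) • x) (ε/2))).toReal = V := by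
      rw [Measure.addHaar_ball_center]
    rw [measureReal_def, h3, smul_eq_mul] at h1
    linarith
  set M := (I/V)^2 / m + 1 with hMdef
  have hM1 : (1:ℝ) ≤ M := le_add_of_nonneg_left (by positivity)
  have hMpos : (0:ℝ) < M := lt_of_lt_of_le one_pos hM1
  have hfM : ∀ x, f x ≤ M := by
    intro x
    by_cases hxS : x ∈ S
    · have h1 := hballest x hxS
      have hfx : 0 < f x := hxS
      have h2 : Real.sqrt (m * f x) ≤ I / V := (le_div_iff₀ hVpos).2 h1
      have h3 : m * f x ≤ (I/V)^2 := by
        have h4 := Real.sq_sqrt (by positivity : (0:ℝ) ≤ m * f x)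
        nlinarith [Real.sqrt_nonneg (m * f x)]
      have h5 : f x ≤ (I/V)^2 / m := (le_div_iff₀ hm).2 (by nlinarith)
      rw [hMdef]
      linarith
    · rw [hS0 x hxS]; linarith
  -- step 3 : on every ray there is a uniform drop point
  obtain ⟨N, hN⟩ := exists_nat_gt (I / ((m/2) * V))
  have hNpos : 0 < (N:ℝ) := lt_of_le_of_lt (by positivity) hN
  set R := ε * (2 * (N:ℝ) + 1) with hRdef
  have hRpos : 0 < R := by positivity
  have hεR : ε ≤ R := by nlinarith
  have hdrop : ∀ θ : E, ‖θ‖ = 1 → ∃ t, ε ≤ t ∧ t ≤ R ∧ f (t • θ) ≤ m/2 := by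
    intro θ hθ
    by_contra hcon
    push_neg at hcon
    set cj : ℕ → ℝ := fun j => ε * (2*(j:ℝ)+1) with hcjdef
    set Bj : ℕ → Set E := fun j => ball (((cj j)/2) • θ) (ε/2) with hBjdef
    have hcjmem : ∀ j, j < N → ε ≤ cj j ∧ cj j ≤ R := by
      intro j hj
      have hjN : (j:ℝ) + 1 ≤ (N:ℝ) := by exact_mod_cast hj
      refine ⟨?_, ?_⟩
      · simp only [hcjdef]; nlinarith [Nat.cast_nonneg (α := ℝ) j, hε.le]
      · simp only [hcjdef, hRdef]; nlinarith [hε.le]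
    have hBsub : ∀ j, j < N → Bj j ⊆ {y : E | m/2 ≤ f y} := by
      intro j hj y hy
      set x := (cj j) • θ with hxdef
      have hfx : m/2 < f x := hcon _ (hcjmem j hj).1 (hcjmem j hj).2
      have hxS : x ∈ S := by
        exact lt_trans (by positivity : (0:ℝ) < m/2) hfx
      set b := (2:ℝ) • y - x with hbdef
      have hyb : y = (1/2:ℝ) • x + (1/2:ℝ) • b := by rw [hbdef]; module
      have hbnorm : ‖b‖ ≤ ε := by
        have hb2 : b = (2:ℝ) • (y - (1/2:ℝ) • x) := by rw [hbdef]; module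
        have hyd : ‖y - (1/2:ℝ) • x‖ < ε/2 := by
          have : y ∈ ball ((1/2:ℝ) • x) (ε/2) := by
            have hcomm : ((cj j)/2) • θ = (1/2:ℝ) • x := by
              rw [hxdef, smul_smul]; ring_nf
            simp only [hBjdef] at hy; rwa [hcomm] at hy
          exact mem_ball_iff_norm.1 this
        rw [hb2, norm_smul]
        simp only [Real.norm_ofNat]
        linarith
      have hbS : b ∈ S := hSm b hbnorm
      have hfb : m ≤ f b := hfm b hbnorm
      have hmle := hmid x hxS b hbS
      rw [← hyb] at hmle
      have : m/2 = Real.sqrt ((m/2) * (m/2)) := (Real.sqrt_mul_self (by positivity)).symm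
      rw [mem_setOf_eq, this]
      refine le_trans (Real.sqrt_le_sqrt ?_) hmle
      nlinarith
    have hdisj : ((Finset.range N : Finset ℕ) : Set ℕ).PairwiseDisjoint Bj := by
      intro i _ j _ hij
      refine ball_disjoint_ball ?_
      have hd : dist (((cj i)/2) • θ) (((cj j)/2) • θ) = |cj i - cj j| / 2 := by
        rw [dist_eq_norm, ← sub_smul, norm_smul, hθ, mul_one, Real.norm_eq_abs]
        rw [show (cj i)/2 - (cj j)/2 = (cj i - cj j)/2 by ring, abs_div]
        simp [abs_of_nonneg, le_of_lt hε]
      have hsepa : (1:ℝ) ≤ |(i:ℝ) - (j:ℝ)| := by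
        rcases lt_or_gt_of_ne hij with h | h
        · have hc : (i:ℝ) + 1 ≤ (j:ℝ) := by exact_mod_cast h
          rw [abs_sub_comm, abs_of_pos (by linarith)]
          linarith
        · have hc : (j:ℝ) + 1 ≤ (i:ℝ) := by exact_mod_cast h
          rw [abs_of_pos (by linarith)]
          linarith
      have hcij : |cj i - cj j| = 2 * ε * |(i:ℝ) - (j:ℝ)| := by
        simp only [hcjdef]
        rw [show ε * (2*(i:ℝ)+1) - ε * (2*(j:ℝ)+1) = 2 * ε * ((i:ℝ) - (j:ℝ)) by ring,
          abs_mul, abs_of_nonneg (by positivity : (0:ℝ) ≤ 2 * ε)]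
      rw [hd, hcij]
      nlinarith
    -- Chebyshev
    have haemeas : AEMeasurable (fun y => ENNReal.ofReal (f y)) μ :=
      ENNReal.measurable_ofReal.comp_aemeasurable hfint.aemeasurable
    have hcheb := mul_meas_ge_le_lintegral₀ haemeas (ENNReal.ofReal (m/2))
    have hlI : ∫⁻ y, ENNReal.ofReal (f y) ∂μ = ENNReal.ofReal I :=
      (ofReal_integral_eq_lintegral_ofReal hfint (Eventually.of_forall hf0)).symm
    have hsubset : (⋃ j ∈ Finset.range N, Bj j)
        ⊆ {y : E | ENNReal.ofReal (m/2) ≤ ENNReal.ofReal (f y)} := by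
      intro y hy
      simp only [Finset.mem_range, mem_iUnion, exists_prop] at hy
      obtain ⟨j, hj, hyj⟩ := hy
      exact ENNReal.ofReal_le_ofReal (hBsub j hj hyj)
    have hμU : μ (⋃ j ∈ Finset.range N, Bj j) = (N : ℝ≥0∞) * μ (ball (0:E) (ε/2)) := by
      rw [measure_biUnion_finset hdisj (fun j _ => measurableSet_ball)]
      have : ∀ j ∈ Finset.range N, μ (Bj j) = μ (ball (0:E) (ε/2)) := by
        intro j _; simp only [hBjdef]; exact Measure.addHaar_ball_center μ _ _
      rw [Finset.sum_congr rfl this, Finset.sum_const, Finset.card_range, nsmul_eq_mul]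
    have hfinal : ENNReal.ofReal (m/2) * ((N : ℝ≥0∞) * μ (ball (0:E) (ε/2)))
        ≤ ENNReal.ofReal I := by
      rw [← hμU, ← hlI]
      exact le_trans (mul_le_mul_right (measure_mono hsubset) _) hcheb
    have hreal : (m/2) * ((N:ℝ) * V) ≤ I := by
      have h1 := ENNReal.toReal_mono (by simp) hfinal
      rw [ENNReal.toReal_mul, ENNReal.toReal_mul, ENNReal.toReal_ofReal (by positivity),
        ENNReal.toReal_ofReal hI0, ENNReal.toReal_natCast] at h1
      exact h1
    have hcontr : I < (N:ℝ) * (m/2 * V) :=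
      (div_lt_iff₀ (by positivity : (0:ℝ) < m/2 * V)).1 hN
    nlinarith
  -- step 4 : assemble
  set c := Real.log 2 / R with hcdef
  have hc : 0 < c := div_pos (Real.log_pos one_lt_two) hRpos
  refine ⟨2*M, c, hc, ?_⟩
  intro x
  by_cases hxR : ‖x‖ ≤ R
  · have h1 : c * ‖x‖ ≤ Real.log 2 := by
      have := mul_le_mul_of_nonneg_left hxR hc.le
      rwa [hcdef, div_mul_cancel₀ _ hRpos.ne'] at this
    have h2 : Real.exp (-Real.log 2) ≤ Real.exp (-(c * ‖x‖)) := Real.exp_le_exp.2 (by linarith)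
    have h3 : Real.exp (-Real.log 2) = 1/2 := by
      rw [Real.exp_neg, Real.exp_log two_pos]; norm_num
    have h4 := hfM x
    rw [neg_mul]
    nlinarith [Real.exp_pos (-(c * ‖x‖))]
  · push_neg at hxR
    have hxpos : 0 < ‖x‖ := lt_trans hRpos hxR
    have hxne : x ≠ 0 := by simpa [norm_pos_iff] using hxpos
    by_cases hxS : x ∈ S
    · set t := ‖x‖ with htdef
      set θ := t⁻¹ • x with hθdef
      have hθ : ‖θ‖ = 1 := by
        rw [hθdef, norm_smul, norm_inv, norm_norm, ← htdef, inv_mul_cancel₀ hxpos.ne']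
      have hxt : x = t • θ := by
        rw [hθdef, smul_smul, mul_inv_cancel₀ hxpos.ne', one_smul]
      obtain ⟨t₀, ht₀ε, ht₀R, ht₀f⟩ := hdrop θ hθ
      have ht₀pos : 0 < t₀ := lt_of_lt_of_le hε ht₀ε
      set lam := t₀ / t with hlamdef
      have hlam : 0 < lam := div_pos ht₀pos hxpos
      have hlam1 : lam ≤ 1 := by
        rw [hlamdef, div_le_one hxpos]; linarith
      have hz : lam • x + (1 - lam) • (0:E) = t₀ • θ := by
        rw [smul_zero, add_zero, hxt, smul_smul, hlamdef, div_mul_cancel₀ _ hxpos.ne']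
      have hcc := hlc.2 hxS h0S hlam.le (show (0:ℝ) ≤ 1 - lam by linarith)
        (show lam + (1 - lam) = 1 by ring)
      rw [hz] at hcc
      simp only [smul_eq_mul] at hcc
      have hzS : t₀ • θ ∈ S := by
        rw [← hz]
        exact hSconv hxS h0S hlam.le (show (0:ℝ) ≤ 1 - lam by linarith)
          (show lam + (1 - lam) = 1 by ring)
      have hfz : 0 < f (t₀ • θ) := hzS
      have hlog1 : Real.log (f (t₀ • θ)) ≤ Real.log (m/2) := logmono hfz ht₀f
      have hlogm2 : Real.log (m/2) = Real.log m - Real.log 2 :=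
        Real.log_div (ne_of_gt hm) two_ne_zero
      have hlog2 : Real.log m ≤ Real.log (f 0) := logmono hm hf0m
      -- lam * (log f x - log f 0) ≤ - log 2
      have hkey : lam * (Real.log (f x) - Real.log (f 0)) ≤ - Real.log 2 := by linarith
      have hdiv : Real.log (f x) - Real.log (f 0) ≤ (- Real.log 2) / lam := by
        rw [le_div_iff₀ hlam]; linarith [hkey]
      have hstep : (- Real.log 2) / lam ≤ -(Real.log 2 * t / R) := by
        rw [hlamdef, div_div_eq_mul_div, neg_mul, neg_div, neg_le_neg_iff]
        have h1 : Real.log 2 * t / R ≤ Real.log 2 * t / t₀ :=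
          div_le_div_of_nonneg_left (by positivity) ht₀pos ht₀R
        exact h1
      have hlogM : Real.log (f 0) ≤ Real.log M := logmono hf0pos (hfM 0)
      have hct : Real.log 2 * t / R = c * t := by rw [hcdef]; ring
      have hfinal : Real.log (f x) ≤ Real.log M - c * t := by
        rw [← hct]; linarith
      have hfxpos : 0 < f x := hxS
      calc f x = Real.exp (Real.log (f x)) := (Real.exp_log hfxpos).symm
        _ ≤ Real.exp (Real.log M - c * t) := Real.exp_le_exp.2 hfinal
        _ = M * Real.exp (-(c*t)) := by
            rw [Real.exp_sub, Real.exp_log hMpos, Real.exp_neg, div_eq_mul_inv]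
        _ ≤ 2*M * Real.exp (-c * ‖x‖) := by
            rw [← htdef, neg_mul]
            nlinarith [Real.exp_pos (-(c*t))]
    · rw [hS0 x hxS]; positivity


set_option maxHeartbeats 1000000 in
/-- Integrability of `‖x‖^j exp(-c‖x‖)` on a finite-dimensional normed space. -/
lemma integrable_norm_pow_exp (j : ℕ) {c : ℝ} (hc : 0 < c) :
    Integrable (fun x : E => ‖x‖ ^ j * Real.exp (-c * ‖x‖)) μ := by
  have hcont : Continuous fun x : E => ‖x‖ ^ j * Real.exp (-c * ‖x‖) := by
    continuity
  refine ⟨hcont.aestronglyMeasurable, ?_⟩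
  rw [hasFiniteIntegral_iff_ofReal (Eventually.of_forall fun x => by positivity)]
  set n := Module.finrank ℝ E with hn
  rw [polar_lintegral μ (fun x : E => ENNReal.ofReal (‖x‖ ^ j * Real.exp (-c * ‖x‖)))
    (hcont.measurable.ennreal_ofReal)]
  have hinner : ∀ θ : sphere (0:E) 1,
      (∫⁻ r in Set.Ioi (0:ℝ), ENNReal.ofReal (r ^ (n-1)) *
        ENNReal.ofReal (‖r • (θ:E)‖ ^ j * Real.exp (-c * ‖r • (θ:E)‖)))
      = ∫⁻ r in Set.Ioi (0:ℝ), ENNReal.ofReal (r ^ (n-1+j) * Real.exp (-c * r)) := by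
    intro θ
    refine setLIntegral_congr_fun measurableSet_Ioi (fun r hr => ?_)
    have hθ : ‖(θ:E)‖ = 1 := mem_sphere_zero_iff_norm.1 θ.2
    have hnr : ‖r • (θ:E)‖ = r := by
      rw [norm_smul, hθ, mul_one, Real.norm_eq_abs, abs_of_pos hr]
    rw [hnr, ← ENNReal.ofReal_mul (pow_nonneg (le_of_lt hr) _)]
    congr 1
    rw [pow_add]; ring
  calc ∫⁻ θ : sphere (0:E) 1,
      (∫⁻ r in Set.Ioi (0:ℝ), ENNReal.ofReal (r ^ (n-1)) *
        ENNReal.ofReal (‖r • (θ:E)‖ ^ j * Real.exp (-c * ‖r • (θ:E)‖))) ∂μ.toSphere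
      = ∫⁻ _ : sphere (0:E) 1,
        (∫⁻ r in Set.Ioi (0:ℝ), ENNReal.ofReal (r ^ (n-1+j) * Real.exp (-c * r))) ∂μ.toSphere :=
        lintegral_congr hinner
    _ = (∫⁻ r in Set.Ioi (0:ℝ), ENNReal.ofReal (r ^ (n-1+j) * Real.exp (-c * r)))
        * μ.toSphere univ := lintegral_const _
    _ < ⊤ := ENNReal.mul_lt_top (intOn_pow_exp (n-1+j) hc).lintegral_lt_top
        (measure_lt_top _ _)


end CentroidAux

end CentroidAuxSection

open CentroidAux Set Metric Filter
open scoped ENNReal NNReal Topology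

set_option maxHeartbeats 2000000 in
/-- If `f : ℝᵏ → ℝ₊` is log-concave, integrable, with `0` in the interior of its
support and with barycenter at the origin (`∫ ⟨x,u⟩ f(x) dx = 0` for all `u`), then the
centroid of the convex body `L_{k+1}(f)` is at the origin. -/
theorem centroid_L_k_add_one (k : ℕ) (hk : 1 ≤ k) (f : EuclideanSpace ℝ (Fin k) → ℝ)
    (hf0 : ∀ x, 0 ≤ f x) (hfint : Integrable f)
    (h0 : (0 : EuclideanSpace ℝ (Fin k)) ∈ interior {x | 0 < f x})
    (hlc : ConcaveOn ℝ {x | 0 < f x} (fun x => Real.log (f x)))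
    (hbar : ∀ u : EuclideanSpace ℝ (Fin k), ∫ x, ⟪x, u⟫ * f x = 0) :
    letI L : Set (EuclideanSpace ℝ (Fin k)) :=
      {x | x = 0 ∨ 1 ≤ ∫ t in Set.Ioi (0:ℝ), t ^ ((k : ℝ) + 1 - 1) * f (t • x)}
    ∫ x in L, x = 0 := by
  haveI : Nonempty (Fin k) := ⟨⟨0, hk⟩⟩
  haveI : Nontrivial (EuclideanSpace ℝ (Fin k)) := by
    refine ⟨⟨EuclideanSpace.single (⟨0, hk⟩ : Fin k) (1:ℝ), 0, fun h => ?_⟩⟩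
    simpa using congrArg (fun v : EuclideanSpace ℝ (Fin k) => v ⟨0, hk⟩) h
  have hdim : Module.finrank ℝ (EuclideanSpace ℝ (Fin k)) = k := finrank_euclideanSpace_fin
  -- exponential decay bound
  obtain ⟨C, c, hc, hdecay⟩ := exp_decay volume f hf0 hfint h0 hlc
  have hC : 0 ≤ C := by nlinarith [hdecay 0, hf0 0, Real.exp_pos (-c * ‖(0:EuclideanSpace ℝ (Fin k))‖)]
  -- a measurable pointwise-dominated version of f
  set g : EuclideanSpace ℝ (Fin k) → ℝ :=
    fun x => max 0 (min (hfint.1.mk f x) (C * Real.exp (-c * ‖x‖))) with hgdef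
  have hgmeas : Measurable g := by
    refine Measurable.max measurable_const (Measurable.min hfint.1.measurable_mk ?_)
    exact (by continuity : Continuous fun x : EuclideanSpace ℝ (Fin k) =>
      C * Real.exp (-c * ‖x‖)).measurable
  have hg0 : ∀ x, 0 ≤ g x := fun x => le_max_left _ _
  have hgle : ∀ x, g x ≤ C * Real.exp (-c * ‖x‖) := fun x => by
    refine max_le (by positivity) (min_le_right _ _)
  have hfg : f =ᵐ[volume] g := by
    filter_upwards [hfint.1.ae_eq_mk] with x hx
    rw [hgdef]
    simp only [← hx, min_eq_left (hdecay x), max_eq_right (hf0 x)]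
  -- the radial function data
  set F : EuclideanSpace ℝ (Fin k) → ℝ :=
    fun x => ∫ t in Set.Ioi (0:ℝ), t ^ k * g (t • x) with hFdef
  have hF0 : ∀ x, 0 ≤ F x := fun x =>
    setIntegral_nonneg measurableSet_Ioi fun t ht =>
      mul_nonneg (pow_nonneg (le_of_lt ht) _) (hg0 _)
  have hFmeas : Measurable F := by
    have hΦ : StronglyMeasurable fun p : EuclideanSpace ℝ (Fin k) × ℝ =>
        p.2 ^ k * g (p.2 • p.1) := by
      refine Measurable.stronglyMeasurable ?_
      exact ((measurable_snd.pow_const k).mul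
        (hgmeas.comp ((continuous_snd.smul continuous_fst).measurable)))
    exact (hΦ.integral_prod_right' (ν := volume.restrict (Set.Ioi 0))).measurable
  have hscale : ∀ (x : EuclideanSpace ℝ (Fin k)) {r : ℝ}, 0 < r →
      F (r • x) = r⁻¹ ^ (k+1) * F x := by
    intro x r hr
    have h1 : ∀ t : ℝ, t ^ k * g (t • r • x) = r⁻¹ ^ k * ((r*t) ^ k * g ((r*t) • x)) := by
      intro t
      have h2 : r⁻¹ ^ k * r ^ k = 1 := by
        rw [← mul_pow, inv_mul_cancel₀ hr.ne', one_pow]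
      rw [smul_smul, mul_comm t r, mul_pow]
      calc t ^ k * g ((r*t) • x)
          = (r⁻¹ ^ k * r ^ k) * (t ^ k * g ((r*t) • x)) := by rw [h2, one_mul]
        _ = r⁻¹ ^ k * (r ^ k * t ^ k * g ((r*t) • x)) := by ring
    calc F (r • x) = ∫ t in Set.Ioi (0:ℝ), r⁻¹ ^ k * ((r*t) ^ k * g ((r*t) • x)) := by
          rw [hFdef]; simp only [h1]
      _ = r⁻¹ ^ k * ∫ t in Set.Ioi (0:ℝ), (r*t) ^ k * g ((r*t) • x) := integral_const_mul _ _
      _ = r⁻¹ ^ k * (r⁻¹ * ∫ s in Set.Ioi (0:ℝ), s ^ k * g (s • x)) := by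
          rw [integral_comp_mul_left_Ioi (fun s => s ^ k * g (s • x)) 0 hr, mul_zero,
            smul_eq_mul]
      _ = r⁻¹ ^ (k+1) * F x := by rw [hFdef, pow_succ]; ring
  set Lg : Set (EuclideanSpace ℝ (Fin k)) := {x | x = 0 ∨ 1 ≤ F x} with hLgdef
  have hmem : ∀ (θ : EuclideanSpace ℝ (Fin k)), ‖θ‖ = 1 → ∀ {r : ℝ}, 0 < r →
      (r • θ ∈ Lg ↔ r ^ (k+1) ≤ F θ) := by
    intro θ hθ r hr
    have hne : r • θ ≠ 0 := smul_ne_zero hr.ne' (by simp [← norm_pos_iff, hθ] : θ ≠ 0)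
    rw [hLgdef]
    simp only [mem_setOf_eq, hne, false_or]
    rw [hscale θ hr, inv_pow, inv_mul_eq_div, le_div_iff₀ (pow_pos hr _), one_mul]
  set ρ : EuclideanSpace ℝ (Fin k) → ℝ := fun x => (F x) ^ (((k:ℝ)+1)⁻¹) with hρdef
  have hρ0 : ∀ x, 0 ≤ ρ x := fun x => Real.rpow_nonneg (hF0 x) _
  have hρpow : ∀ x, ρ x ^ (k+1) = F x := by
    intro x
    rw [hρdef, ← Real.rpow_natCast ((F x) ^ (((k:ℝ)+1)⁻¹)) (k+1), ← Real.rpow_mul (hF0 x)]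
    rw [show (((k:ℕ)+1 : ℕ) : ℝ) = (k:ℝ)+1 by push_cast; ring]
    rw [inv_mul_cancel₀ (by positivity : ((k:ℝ)+1) ≠ 0), Real.rpow_one]
  have hmem' : ∀ (θ : EuclideanSpace ℝ (Fin k)), ‖θ‖ = 1 → ∀ {r : ℝ}, 0 < r →
      (r • θ ∈ Lg ↔ r ≤ ρ θ) := by
    intro θ hθ r hr
    rw [hmem θ hθ hr, ← hρpow θ]
    exact pow_le_pow_iff_left₀ hr.le (hρ0 θ) (Nat.succ_ne_zero k)
  -- a uniform bound for F on the sphere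
  set B := ∫ t in Set.Ioi (0:ℝ), t ^ k * (C * Real.exp (-c * t)) with hBdef
  have hBint : IntegrableOn (fun t : ℝ => t ^ k * (C * Real.exp (-c * t))) (Set.Ioi 0) := by
    have h1 : IntegrableOn (fun t : ℝ => C * (t ^ k * Real.exp (-c * t))) (Set.Ioi 0) :=
      (intOn_pow_exp k hc).const_mul C
    exact h1.congr_fun (fun t _ => by ring) measurableSet_Ioi
  have hFB : ∀ (θ : EuclideanSpace ℝ (Fin k)), ‖θ‖ = 1 → F θ ≤ B := by
    intro θ hθ
    refine integral_mono_of_nonneg ?_ hBint ?_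
    · filter_upwards [ae_restrict_mem measurableSet_Ioi] with t ht
      exact mul_nonneg (pow_nonneg ht.le _) (hg0 _)
    · filter_upwards [ae_restrict_mem measurableSet_Ioi] with t ht
      have h1 : g (t • θ) ≤ C * Real.exp (-c * t) := by
        have h2 := hgle (t • θ)
        rwa [norm_smul, hθ, mul_one, Real.norm_eq_abs, abs_of_pos ht] at h2
      exact mul_le_mul_of_nonneg_left h1 (pow_nonneg ht.le _)
  -- Lg is bounded and measurable
  have hLgsub : Lg ⊆ Metric.closedBall 0 (max 1 B) := by
    intro x hx
    rw [mem_closedBall_zero_iff]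
    by_cases hx0 : x = 0
    · rw [hx0, norm_zero]; exact le_trans zero_le_one (le_max_left _ _)
    · have hr : 0 < ‖x‖ := norm_pos_iff.2 hx0
      set θ := ‖x‖⁻¹ • x with hθdef
      have hθ : ‖θ‖ = 1 := by
        rw [hθdef, norm_smul, norm_inv, norm_norm, inv_mul_cancel₀ hr.ne']
      have hxt : x = ‖x‖ • θ := by
        rw [hθdef, smul_smul, mul_inv_cancel₀ hr.ne', one_smul]
      have hxLg : ‖x‖ • θ ∈ Lg := by rw [← hxt]; exact hx
      have h1 : ‖x‖ ^ (k+1) ≤ F θ := (hmem θ hθ hr).1 hxLg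
      have h2 : F θ ≤ B := hFB θ hθ
      by_cases hx1 : ‖x‖ ≤ 1
      · exact le_trans hx1 (le_max_left _ _)
      · push_neg at hx1
        have h3 : ‖x‖ ≤ ‖x‖ ^ (k+1) := le_self_pow₀ hx1.le (Nat.succ_ne_zero k)
        exact le_trans (le_trans h3 (le_trans h1 h2)) (le_max_right _ _)
  have hLgmeas : MeasurableSet Lg := by
    have : Lg = {(0 : EuclideanSpace ℝ (Fin k))} ∪ F ⁻¹' (Set.Ici 1) := by
      ext x; simp [hLgdef, Set.mem_setOf_eq, eq_comm]
    rw [this]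
    exact (measurableSet_singleton _).union (hFmeas measurableSet_Ici)
  have hIntOn : IntegrableOn (fun x : EuclideanSpace ℝ (Fin k) => x) Lg volume :=
    (continuous_id.continuousOn.integrableOn_compact
      (isCompact_closedBall (0 : EuclideanSpace ℝ (Fin k)) (max 1 B))).mono_set hLgsub
  have hG1 : Integrable (Lg.indicator (fun x : EuclideanSpace ℝ (Fin k) => x)) volume :=
    (integrable_indicator_iff hLgmeas).2 hIntOn
  -- integrability of g x • x
  have hG2 : Integrable (fun x : EuclideanSpace ℝ (Fin k) => g x • x) volume := by
    refine Integrable.mono' ((integrable_norm_pow_exp volume 1 hc).const_mul C)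
      ((hgmeas.smul measurable_id).aestronglyMeasurable) ?_
    refine Eventually.of_forall fun x => ?_
    rw [norm_smul, Real.norm_eq_abs, abs_of_nonneg (hg0 x), pow_one]
    have h1 := hgle x
    nlinarith [norm_nonneg x, Real.exp_pos (-c * ‖x‖), hg0 x]
  -- the barycenter condition kills the vector integral
  have hIzero : ∫ x, g x • x = (0 : EuclideanSpace ℝ (Fin k)) := by
    have hcomm : ∀ u : EuclideanSpace ℝ (Fin k), ⟪u, ∫ x, g x • x⟫ = 0 := by
      intro u
      have h1 := ContinuousLinearMap.integral_comp_comm (innerSL ℝ u) hG2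
      simp only [innerSL_apply_apply] at h1
      rw [← h1]
      have h2 : ∀ᵐ x ∂(volume : Measure (EuclideanSpace ℝ (Fin k))),
          ⟪u, g x • x⟫ = ⟪x, u⟫ * f x := by
        filter_upwards [hfg] with x hx
        rw [real_inner_smul_right, real_inner_comm, ← hx]; ring
      rw [integral_congr_ae h2, hbar u]
    have h1 := hcomm (∫ x, g x • x)
    exact inner_self_eq_zero.1 h1
  -- polar computation for g x • x
  have hpolar2 : ∫ x, g x • x = ∫ θ : sphere (0 : EuclideanSpace ℝ (Fin k)) 1,
      F (θ : EuclideanSpace ℝ (Fin k)) • (θ : EuclideanSpace ℝ (Fin k)) ∂volume.toSphere := by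
    rw [polar_integral volume _ hG2]
    simp only [hdim]
    refine integral_congr_ae (Eventually.of_forall fun θ => ?_)
    beta_reduce
    have h1 : ∀ r ∈ Set.Ioi (0:ℝ), r ^ (k-1) • (g (r • (θ : EuclideanSpace ℝ (Fin k))) •
        (r • (θ : EuclideanSpace ℝ (Fin k))))
        = (r ^ k * g (r • (θ : EuclideanSpace ℝ (Fin k)))) • (θ : EuclideanSpace ℝ (Fin k)) := by
      intro r hr
      rw [smul_smul, smul_smul]
      congr 1
      rw [show r ^ k = r ^ (k-1) * r by
        conv_lhs => rw [show k = k - 1 + 1 from (Nat.succ_pred_eq_of_pos hk).symm]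
        rw [pow_succ]]
      ring
    rw [setIntegral_congr_fun measurableSet_Ioi h1, integral_smul_const]
  -- polar computation for the indicator
  have hpolar1 : ∫ x in Lg, x = ∫ θ : sphere (0 : EuclideanSpace ℝ (Fin k)) 1,
      ((k:ℝ)+1)⁻¹ • (F (θ : EuclideanSpace ℝ (Fin k)) • (θ : EuclideanSpace ℝ (Fin k)))
        ∂volume.toSphere := by
    rw [← integral_indicator hLgmeas, polar_integral volume _ hG1]
    simp only [hdim]
    refine integral_congr_ae (Eventually.of_forall fun θ => ?_)
    beta_reduce
    have hθn : ‖(θ : EuclideanSpace ℝ (Fin k))‖ = 1 := mem_sphere_zero_iff_norm.1 θ.2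
    have h1 : ∀ r ∈ Set.Ioi (0:ℝ), r ^ (k-1) •
        (Lg.indicator (fun x : EuclideanSpace ℝ (Fin k) => x)
          (r • (θ : EuclideanSpace ℝ (Fin k))))
        = ((Set.Ioc (0:ℝ) (ρ (θ : EuclideanSpace ℝ (Fin k)))).indicator (fun s => s ^ k) r)
            • (θ : EuclideanSpace ℝ (Fin k)) := by
      intro r hr
      by_cases hmemb : r • (θ : EuclideanSpace ℝ (Fin k)) ∈ Lg
      · have hrρ : r ∈ Set.Ioc 0 (ρ (θ : EuclideanSpace ℝ (Fin k))) :=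
          ⟨hr, (hmem' _ hθn hr).1 hmemb⟩
        rw [Set.indicator_of_mem hmemb, Set.indicator_of_mem hrρ, smul_smul]
        congr 1
        rw [show r ^ k = r ^ (k-1) * r by
          conv_lhs => rw [show k = k - 1 + 1 from (Nat.succ_pred_eq_of_pos hk).symm]
          rw [pow_succ]]
      · have hrρ : r ∉ Set.Ioc 0 (ρ (θ : EuclideanSpace ℝ (Fin k))) := by
          intro hcon
          exact hmemb ((hmem' _ hθn hr).2 hcon.2)
        rw [Set.indicator_of_notMem hmemb, Set.indicator_of_notMem hrρ, smul_zero, zero_smul]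
    rw [setIntegral_congr_fun measurableSet_Ioi h1, integral_smul_const]
    have h2 : ∫ r in Set.Ioi (0:ℝ),
        (Set.Ioc (0:ℝ) (ρ (θ : EuclideanSpace ℝ (Fin k)))).indicator (fun s => s ^ k) r
        = ((k:ℝ)+1)⁻¹ * F (θ : EuclideanSpace ℝ (Fin k)) := by
      rw [integral_indicator measurableSet_Ioc, Measure.restrict_restrict measurableSet_Ioc,
        Set.inter_eq_self_of_subset_left Set.Ioc_subset_Ioi_self,
        ← intervalIntegral.integral_of_le (hρ0 _), integral_pow, ← hρpow
          (θ : EuclideanSpace ℝ (Fin k))]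
      rw [zero_pow (Nat.succ_ne_zero k), sub_zero]
      push_cast
      ring
    rw [h2, mul_smul]
  -- identify the two set descriptions
  have hLf_rw : {x : EuclideanSpace ℝ (Fin k) |
        x = 0 ∨ 1 ≤ ∫ t in Set.Ioi (0:ℝ), t ^ ((k : ℝ) + 1 - 1) * f (t • x)}
      = {x : EuclideanSpace ℝ (Fin k) |
        x = 0 ∨ 1 ≤ ∫ t in Set.Ioi (0:ℝ), t ^ k * f (t • x)} := by
    simp only [add_sub_cancel_right, Real.rpow_natCast]
  have hae : ∀ᵐ x ∂(volume : Measure (EuclideanSpace ℝ (Fin k))),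
      (∫ t in Set.Ioi (0:ℝ), t ^ k * f (t • x)) = F x := by
    set N := toMeasurable volume {x : EuclideanSpace ℝ (Fin k) | f x ≠ g x} with hNdef
    have hNmeas : MeasurableSet N := measurableSet_toMeasurable _ _
    have hNnull : volume N = 0 := by
      rw [hNdef, measure_toMeasurable]
      exact ae_iff.1 hfg
    have hsubN : {x : EuclideanSpace ℝ (Fin k) | f x ≠ g x} ⊆ N := subset_toMeasurable _ _
    set T := {p : EuclideanSpace ℝ (Fin k) × ℝ | p.2 • p.1 ∈ N} with hTdef
    have hTmeas : MeasurableSet T :=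
      (continuous_snd.smul continuous_fst).measurable hNmeas
    have hTnull : (volume.prod (volume.restrict (Set.Ioi (0:ℝ)))) T = 0 := by
      rw [Measure.prod_apply_symm hTmeas]
      have h0' : ∀ᵐ t ∂(volume.restrict (Set.Ioi (0:ℝ))),
          volume ((fun x : EuclideanSpace ℝ (Fin k) => (x, t)) ⁻¹' T) = 0 := by
        filter_upwards [ae_restrict_mem measurableSet_Ioi] with t ht
        have hpre : ((fun x : EuclideanSpace ℝ (Fin k) => (x, t)) ⁻¹' T)
            = (fun x : EuclideanSpace ℝ (Fin k) => t • x) ⁻¹' N := rfl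
        rw [hpre, Measure.addHaar_preimage_smul volume (ne_of_gt ht), hNnull, mul_zero]
      rw [lintegral_congr_ae h0', lintegral_zero]
    have hae2 := Measure.ae_ae_of_ae_prod (measure_eq_zero_iff_ae_notMem.1 hTnull)
    filter_upwards [hae2] with x hx
    refine integral_congr_ae ?_
    filter_upwards [hx] with t ht
    have hfgx : f (t • x) = g (t • x) := by
      by_contra hne
      exact ht (hsubN hne)
    rw [hfgx]
  have hLL : {x : EuclideanSpace ℝ (Fin k) |
        x = 0 ∨ 1 ≤ ∫ t in Set.Ioi (0:ℝ), t ^ k * f (t • x)} =ᵐ[volume] Lg := by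
    rw [eventuallyEq_set]
    filter_upwards [hae] with x hx
    rw [hLgdef]
    simp only [Set.mem_setOf_eq, hx]
  -- final computation
  show ∫ x in {x : EuclideanSpace ℝ (Fin k) |
      x = 0 ∨ 1 ≤ ∫ t in Set.Ioi (0:ℝ), t ^ ((k : ℝ) + 1 - 1) * f (t • x)}, x = 0
  rw [hLf_rw, setIntegral_congr_set hLL, hpolar1, integral_smul, ← hpolar2, hIzero, smul_zero]
end

section
/- Let L be a convex body in ℝᵏ with centroid at the origin. Then −L ⊆ k·L; equivalently, for every unit vector θ, 1/k ≤ ‖θ‖_L/‖−θ‖_L ≤ k, where ‖·‖_L is the Minkowski functional of L. -/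
open MeasureTheory Pointwise Set

lemma slice_cone {n : ℕ} {K : Set (ℝ × (Fin n → ℝ))} (hconv : Convex ℝ K)
    {q : ℝ × (Fin n → ℝ)} (hq : q ∈ K) {lam : ℝ} (h0 : 0 ≤ lam) (h1 : lam ≤ 1) (t : ℝ) :
    ENNReal.ofReal ((1-lam)^n) * volume {y | (t, y) ∈ K}
      ≤ volume {y | ((1-lam)*t + lam*q.1, y) ∈ K} := by
  have h1' : (0:ℝ) ≤ 1 - lam := by linarith
  set s : Set (Fin n → ℝ) := {y | (t, y) ∈ K} with hs
  have hsub : (fun y => lam • q.2 + (1-lam) • y) '' s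
      ⊆ {y | ((1-lam)*t + lam*q.1, y) ∈ K} := by
    rintro _ ⟨y, hy, rfl⟩
    have h := hconv hy hq h1' h0 (by ring)
    have heq : (1-lam) • ((t : ℝ), y) + lam • q
        = ((1-lam)*t + lam*q.1, lam • q.2 + (1-lam) • y) := by
      refine Prod.ext ?_ ?_
      · simp [smul_eq_mul]
      · simp only [Prod.snd_add, Prod.smul_snd]
        module
    rw [heq] at h
    exact h
  have himg : (fun y => lam • q.2 + (1-lam) • y) '' s = lam • q.2 +ᵥ ((1-lam) • s) := by
    rw [← Set.image_vadd, ← Set.image_smul, Set.image_image]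
    rfl
  calc ENNReal.ofReal ((1-lam)^n) * volume s
      = volume ((fun y => lam • q.2 + (1-lam) • y) '' s) := by
        rw [himg, measure_vadd, Measure.addHaar_smul volume,
          Module.finrank_fin_fun, abs_of_nonneg (pow_nonneg h1' n)]
    _ ≤ _ := measure_mono hsub

lemma key_prod {n : ℕ} {K : Set (ℝ × (Fin n → ℝ))} (hKc : IsCompact K)
    (hconv : Convex ℝ K) (hvol : 0 < volume K) (hcent : ∫ p in K, p.1 = 0) :
    sSup (Prod.fst '' K) ≤ (n+1 : ℝ) * (- sInf (Prod.fst '' K)) := by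
  have hKm : MeasurableSet K := hKc.isClosed.measurableSet
  have hne : K.Nonempty := nonempty_of_measure_ne_zero hvol.ne'
  have himgc : IsCompact (Prod.fst '' K) := hKc.image continuous_fst
  set M := sSup (Prod.fst '' K) with hM
  set m := sInf (Prod.fst '' K) with hm
  obtain ⟨p, hp, hpM⟩ : ∃ p ∈ K, p.1 = M := by
    obtain ⟨p, hp, h⟩ := himgc.sSup_mem (hne.image _)
    exact ⟨p, hp, h⟩
  obtain ⟨q, hq, hqm⟩ : ∃ q ∈ K, q.1 = m := by
    obtain ⟨q, hq, h⟩ := himgc.sInf_mem (hne.image _)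
    exact ⟨q, hq, h⟩
  have hleM : ∀ x ∈ K, x.1 ≤ M := fun x hx => le_csSup himgc.bddAbove ⟨x, hx, rfl⟩
  have hgem : ∀ x ∈ K, m ≤ x.1 := fun x hx => csInf_le himgc.bddBelow ⟨x, hx, rfl⟩
  have hmM : m ≤ M := (hgem p hp).trans (hleM p hp)
  set A : ℝ → ENNReal := fun t => volume {y | (t, y) ∈ K} with hA
  have hAfin : ∀ t, A t ≠ ⊤ := by
    intro t
    have hsub : {y | (t, y) ∈ K} ⊆ Prod.snd '' K := fun y hy => ⟨(t, y), hy, rfl⟩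
    exact ((measure_mono hsub).trans_lt (hKc.image continuous_snd).measure_lt_top).ne
  have hslice_m : ∀ t : ℝ, MeasurableSet {y | (t, y) ∈ K} :=
    fun t => hKm.preimage measurable_prodMk_left
  have hAout : ∀ t, t ∉ Icc m M → A t = 0 := by
    intro t ht
    have : {y | (t, y) ∈ K} = ∅ := by
      ext y
      simp only [mem_setOf_eq, mem_empty_iff_false, iff_false]
      intro hy
      exact ht ⟨hgem _ hy, hleM _ hy⟩
    rw [hA]
    simp [this]
  have hIntOn : IntegrableOn (fun p : ℝ × (Fin n → ℝ) => p.1) K volume :=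
    ContinuousOn.integrableOn_compact hKc continuous_fst.continuousOn
  set g : ℝ × (Fin n → ℝ) → ℝ := K.indicator (fun p => p.1) with hg
  have hgint : Integrable g ((volume : Measure ℝ).prod (volume : Measure (Fin n → ℝ))) := by
    rw [← Measure.volume_eq_prod]
    exact (integrable_indicator_iff hKm).2 hIntOn
  have hinner : ∀ t : ℝ, (∫ y, g (t, y)) = (A t).toReal * t := by
    intro t
    have h1 : ∀ y, g (t, y) = ({y | (t, y) ∈ K}).indicator (fun _ => t) y := by
      intro y
      simp only [hg, Set.indicator_apply, mem_setOf_eq]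
      rfl
    simp_rw [h1]
    rw [integral_indicator_const _ (hslice_m t)]
    simp [smul_eq_mul]
    left; rfl
  have h0 : ∫ t : ℝ, (A t).toReal * t = 0 := by
    have h2 : ∫ p in K, p.1 ∂(volume : Measure (ℝ × (Fin n → ℝ))) = ∫ p, g p := by
      rw [hg, integral_indicator hKm]
    rw [Measure.volume_eq_prod] at h2
    calc ∫ t : ℝ, (A t).toReal * t = ∫ t, ∫ y, g (t, y) := by simp_rw [hinner]
      _ = ∫ p, g p ∂((volume : Measure ℝ).prod volume) := (integral_prod g hgint).symm
      _ = ∫ p in K, p.1 ∂((volume : Measure ℝ).prod volume) := h2.symm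
      _ = 0 := by rw [← Measure.volume_eq_prod]; exact hcent
  have hInt : Integrable (fun t : ℝ => (A t).toReal * t) (volume : Measure ℝ) := by
    have h3 := hgint.integral_prod_left
    simp_rw [hinner] at h3
    exact h3
  have hKfin : volume K ≠ ⊤ := hKc.measure_lt_top.ne
  have hvolR : (0:ℝ) < (volume K).toReal := ENNReal.toReal_pos hvol.ne' hKfin
  -- m ≤ 0
  have hm0 : m ≤ 0 := by
    by_contra hcon
    push_neg at hcon
    have : (0:ℝ) < ∫ p in K, p.1 ∂(volume : Measure (ℝ × (Fin n → ℝ))) := by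
      have h4 : ∫ p in K, (fun _ : ℝ × (Fin n → ℝ) => m) p ∂volume ≤ ∫ p in K, p.1 ∂volume :=
        setIntegral_mono_on (integrableOn_const hKc.measure_lt_top.ne) hIntOn hKm
          (fun x hx => hgem x hx)
      rw [setIntegral_const] at h4
      calc (0:ℝ) < (volume K).toReal • m := by
            simpa [smul_eq_mul] using mul_pos hvolR hcon
        _ ≤ _ := h4
    rw [hcent] at this
    exact lt_irrefl _ this
  have hM0 : 0 ≤ M := by
    by_contra hcon
    push_neg at hcon
    have : ∫ p in K, p.1 ∂(volume : Measure (ℝ × (Fin n → ℝ))) < 0 := by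
      have h4 : ∫ p in K, p.1 ∂volume ≤ ∫ p in K, (fun _ : ℝ × (Fin n → ℝ) => M) p ∂volume :=
        setIntegral_mono_on hIntOn (integrableOn_const hKc.measure_lt_top.ne) hKm
          (fun x hx => hleM x hx)
      rw [setIntegral_const] at h4
      calc ∫ p in K, p.1 ∂volume ≤ (volume K).toReal • M := h4
        _ < 0 := by simpa [smul_eq_mul] using mul_neg_of_pos_of_neg hvolR hcon
    rw [hcent] at this
    exact lt_irrefl _ this
  -- the hyperplane {p.1 = 0} is null
  have hplane : volume {p : ℝ × (Fin n → ℝ) | p.1 = 0} = 0 := by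
    have he : {p : ℝ × (Fin n → ℝ) | p.1 = 0} = ({0} : Set ℝ) ×ˢ (univ : Set (Fin n → ℝ)) := by
      ext p
      simp only [Set.mem_prod, Set.mem_singleton_iff, Set.mem_univ, and_true, Set.mem_setOf_eq]
    rw [he, Measure.volume_eq_prod, Measure.prod_prod, Real.volume_singleton, zero_mul]
  have hzero_case : ∀ f : ℝ × (Fin n → ℝ) → ℝ, Continuous f → (∀ x ∈ K, 0 ≤ f x) →
      (∫ x in K, f x ∂(volume : Measure (ℝ × (Fin n → ℝ))) = 0) →
      (∀ x : ℝ × (Fin n → ℝ), x.1 ≠ 0 → f x ≠ 0) → False := by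
    intro f hfc hnn hz himp
    have hint : IntegrableOn f K volume := ContinuousOn.integrableOn_compact hKc hfc.continuousOn
    have hae : 0 ≤ᶠ[ae (volume.restrict K)] f :=
      ae_restrict_of_forall_mem hKm hnn
    have hfz : f =ᶠ[ae ((volume : Measure (ℝ × (Fin n → ℝ))).restrict K)] 0 :=
      (integral_eq_zero_iff_of_nonneg_ae hae hint).1 hz
    have hnull : (volume : Measure (ℝ × (Fin n → ℝ))).restrict K {x | f x ≠ 0} = 0 := by
      have := hfz
      rw [Filter.EventuallyEq, ae_iff] at this
      simpa using this
    rw [show {x : ℝ × (Fin n → ℝ) | f x ≠ 0} = ({x | f x = 0})ᶜ from rfl,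
      Measure.restrict_apply (measurableSet_eq_fun hfc.measurable measurable_const).compl] at hnull
    have hsub : K ⊆ {x : ℝ × (Fin n → ℝ) | x.1 = 0} ∪ (({x | f x = 0})ᶜ ∩ K) := by
      intro x hx
      by_cases hx1 : x.1 = 0
      · exact Or.inl hx1
      · exact Or.inr ⟨himp x hx1, hx⟩
    have : volume K = 0 := by
      refine le_antisymm ?_ zero_le
      calc volume K ≤ volume ({x : ℝ × (Fin n → ℝ) | x.1 = 0} ∪ (({x | f x = 0})ᶜ ∩ K)) :=
            measure_mono hsub
        _ ≤ volume {x : ℝ × (Fin n → ℝ) | x.1 = 0} + volume (({x | f x = 0})ᶜ ∩ K) :=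
            measure_union_le _ _
        _ = 0 := by rw [hplane, hnull, add_zero]
    exact hvol.ne' this
  have hMpos : 0 < M := by
    rcases hM0.eq_or_lt with h | h
    · exfalso
      refine hzero_case (fun x => -x.1) (continuous_fst.neg) (fun x hx => ?_)
        (by rw [integral_neg, hcent, neg_zero]) ?_
      · have h5 := hleM x hx
        rw [← h] at h5
        simpa using h5
      · intro x hx1
        simpa using hx1
    · exact h
  have hmneg : m < 0 := by
    rcases hm0.eq_or_lt with h | h
    · exfalso
      refine hzero_case (fun x => x.1) continuous_fst (fun x hx => ?_) hcent ?_
      · have h5 := hgem x hx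
        rw [h] at h5
        exact h5
      · intro x hx1
        simpa using hx1
    · exact h
  have cone_real : ∀ r : ℝ × (Fin n → ℝ), r ∈ K → ∀ lam t : ℝ, 0 ≤ lam → lam ≤ 1 →
      (1-lam)^n * (A t).toReal ≤ (A ((1-lam)*t + lam*r.1)).toReal := by
    intro r hr lam t h0l h1l
    have h := slice_cone hconv hr h0l h1l t
    have h2 := ENNReal.toReal_mono (hAfin _) h
    rwa [ENNReal.toReal_mul, ENNReal.toReal_ofReal (pow_nonneg (by linarith) n)] at h2
  have hexists : ∃ t₀, A t₀ ≠ 0 := by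
    by_contra hcontra
    push_neg at hcontra
    have h6 : volume K = 0 := by
      have h7 := Measure.prod_apply (μ := (volume : Measure ℝ))
        (ν := (volume : Measure (Fin n → ℝ))) hKm
      rw [← Measure.volume_eq_prod] at h7
      rw [h7]
      have h8 : ∀ t : ℝ, volume (Prod.mk t ⁻¹' K) = 0 := fun t => hcontra t
      simp [h8]
    exact hvol.ne' h6
  obtain ⟨t₀, ht₀⟩ := hexists
  have ht₀mem : t₀ ∈ Icc m M := by
    by_contra h
    exact ht₀ (hAout t₀ h)
  have ha0pos : 0 < (A 0).toReal := by
    have ht₀pos : 0 < (A t₀).toReal := ENNReal.toReal_pos ht₀ (hAfin t₀)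
    rcases le_or_gt t₀ 0 with hcase | hcase
    · have hMt : 0 < M - t₀ := by linarith
      set lam := -t₀ / (M - t₀) with hlam
      have h0l : 0 ≤ lam := div_nonneg (by linarith) hMt.le
      have h1l : lam ≤ 1 := by rw [div_le_one hMt]; linarith
      have hlc : lam * (M - t₀) = -t₀ := div_mul_cancel₀ _ hMt.ne'
      have h1ml : 0 < 1 - lam := by
        have he : 1 - lam = M / (M - t₀) := by
          rw [eq_div_iff hMt.ne']; linear_combination -hlc
        rw [he]; positivity
      have hc := cone_real p hp lam t₀ h0l h1l
      have htarget : (1-lam)*t₀ + lam*p.1 = 0 := by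
        rw [hpM]; linear_combination hlc
      rw [htarget] at hc
      calc (0:ℝ) < (1-lam)^n * (A t₀).toReal := by positivity
        _ ≤ _ := hc
    · have hmt : 0 < t₀ - m := by linarith
      set lam := t₀ / (t₀ - m) with hlam
      have h0l : 0 ≤ lam := div_nonneg hcase.le hmt.le
      have h1l : lam ≤ 1 := by rw [div_le_one hmt]; linarith
      have hlc : lam * (t₀ - m) = t₀ := div_mul_cancel₀ _ hmt.ne'
      have h1ml : 0 < 1 - lam := by
        have he : 1 - lam = -m / (t₀ - m) := by
          rw [eq_div_iff hmt.ne']; linear_combination -hlc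
        rw [he]
        have : (0:ℝ) < -m := by linarith
        positivity
      have hc := cone_real q hq lam t₀ h0l h1l
      have htarget : (1-lam)*t₀ + lam*q.1 = 0 := by
        rw [hqm]; linear_combination -hlc
      rw [htarget] at hc
      calc (0:ℝ) < (1-lam)^n * (A t₀).toReal := by positivity
        _ ≤ _ := hc
  set a0 : ℝ := (A 0).toReal with ha0
  have hclaim : ∀ t ∈ Icc m M, a0 * ((M-t)/M)^n * t ≤ (A t).toReal * t := by
    intro t ht
    rcases le_or_gt 0 t with htpos | htneg
    · have hlam0 : 0 ≤ t / M := div_nonneg htpos hMpos.le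
      have hlam1 : t / M ≤ 1 := by rw [div_le_one hMpos]; exact ht.2
      have hc := cone_real p hp (t/M) 0 hlam0 hlam1
      have h1m : 1 - t/M = (M-t)/M := by field_simp [hMpos.ne']
      have htar : (1 - t/M)*0 + (t/M)*p.1 = t := by
        rw [hpM]; field_simp [hMpos.ne']; ring
      rw [htar, h1m] at hc
      have hc' : a0 * ((M-t)/M)^n ≤ (A t).toReal := by rw [mul_comm] at hc; exact hc
      exact mul_le_mul_of_nonneg_right hc' htpos
    · have hMt : 0 < M - t := by linarith
      set lam := -t / (M - t) with hlam
      have h0l : 0 ≤ lam := div_nonneg (by linarith) hMt.le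
      have h1l : lam ≤ 1 := by rw [div_le_one hMt]; linarith
      have hlc : lam * (M - t) = -t := div_mul_cancel₀ _ hMt.ne'
      have he : 1 - lam = M/(M-t) := by rw [eq_div_iff hMt.ne']; linear_combination -hlc
      have hc := cone_real p hp lam t h0l h1l
      have htar : (1-lam)*t + lam*p.1 = 0 := by rw [hpM]; linear_combination hlc
      rw [htar, he] at hc
      have hAle : (A t).toReal ≤ a0 * ((M-t)/M)^n := by
        have hpow : (0:ℝ) < (M/(M-t))^n := by positivity
        have h9 : (A t).toReal ≤ a0 / (M/(M-t))^n := by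
          rw [le_div_iff₀ hpow]
          calc (A t).toReal * (M/(M-t))^n = (M/(M-t))^n * (A t).toReal := mul_comm _ _
            _ ≤ a0 := hc
        rwa [div_eq_mul_inv, ← inv_pow, inv_div] at h9
      exact mul_le_mul_of_nonpos_right hAle htneg.le
  have hIcc0 : ∫ t in Icc m M, (A t).toReal * t ∂(volume : Measure ℝ) = 0 := by
    rw [setIntegral_eq_integral_of_forall_compl_eq_zero (fun t ht => by rw [hAout t ht]; simp)]
    exact h0
  have hcomp : ∫ t in Icc m M, a0 * ((M-t)/M)^n * t ∂(volume : Measure ℝ) ≤ 0 := by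
    rw [← hIcc0]
    refine setIntegral_mono_on ?_ hInt.integrableOn measurableSet_Icc hclaim
    exact Continuous.integrableOn_Icc (by fun_prop)
  have hcalc : ∫ t in Icc m M, a0 * ((M-t)/M)^n * t ∂(volume : Measure ℝ)
      = (a0 / M^n) * (M * (M-m)^(n+1)/((n:ℝ)+1) - (M-m)^(n+2)/((n:ℝ)+2)) := by
    rw [integral_Icc_eq_integral_Ioc, ← intervalIntegral.integral_of_le hmM]
    have hfe : ∀ t : ℝ, a0 * ((M-t)/M)^n * t = (a0/M^n) * ((M - (M - t)) * (M-t)^n) := by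
      intro t
      rw [div_pow]
      field_simp [hMpos.ne']
      ring
    simp_rw [hfe]
    rw [intervalIntegral.integral_const_mul]
    congr 1
    rw [intervalIntegral.integral_comp_sub_left (fun s => (M - s) * s ^ n) M, sub_self]
    have hsplit : ∀ s : ℝ, (M - s)*s^n = M * s^n - s^(n+1) := by intro s; ring
    simp_rw [hsplit]
    rw [intervalIntegral.integral_sub (f := fun x : ℝ => M * x ^ n) ((continuous_const.mul (continuous_pow n)).intervalIntegrable _ _)
      ((continuous_pow (n+1)).intervalIntegrable _ _),
      intervalIntegral.integral_const_mul, integral_pow, integral_pow]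
    push_cast
    ring
  rw [hcalc] at hcomp
  have hcm : (0:ℝ) < M - m := by linarith
  have hfrac : M * (M-m)^(n+1)/((n:ℝ)+1) ≤ (M-m)^(n+2)/((n:ℝ)+2) := by
    have hpos : (0:ℝ) < a0 / M^n := by positivity
    nlinarith [hcomp, hpos]
  have h3 : (M * (M-m)^(n+1)) * ((n:ℝ)+2) ≤ ((M-m)^(n+2)) * ((n:ℝ)+1) := by
    rw [div_le_div_iff₀ (by positivity) (by positivity)] at hfrac
    exact hfrac
  have h1 : (0:ℝ) < (M-m)^(n+1) := by positivity
  have hfin : M * ((n:ℝ)+2) ≤ (M-m)*((n:ℝ)+1) := by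
    have h4 : (M * ((n:ℝ)+2)) * (M-m)^(n+1) ≤ ((M-m)*((n:ℝ)+1)) * (M-m)^(n+1) := by
      have e1 : (M * ((n:ℝ)+2)) * (M-m)^(n+1) = M * (M-m)^(n+1) * ((n:ℝ)+2) := by ring
      have e2 : ((M-m)*((n:ℝ)+1)) * (M-m)^(n+1) = (M-m)^(n+2) * ((n:ℝ)+1) := by ring
      rw [e1, e2]; exact h3
    exact le_of_mul_le_mul_right h4 h1
  have hnn : (0:ℝ) ≤ (n:ℝ) := Nat.cast_nonneg n
  linarith

lemma key_sup {n : ℕ} {L : Set (EuclideanSpace ℝ (Fin (n+1)))} (hLc : IsCompact L)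
    (hLconv : Convex ℝ L) (hLint : (interior L).Nonempty) (hcent : ∫ x in L, x = 0)
    (u : EuclideanSpace ℝ (Fin (n+1))) (hu : ‖u‖ = 1) :
    sSup ((fun x => (inner ℝ x u : ℝ)) '' L)
      ≤ ((n:ℝ)+1) * sSup ((fun x => (inner ℝ x (-u) : ℝ)) '' L) := by
  classical
  set e : EuclideanSpace ℝ (Fin (n+1)) := EuclideanSpace.single (0 : Fin (n+1)) (1:ℝ) with he
  have hnorme : ‖e‖ = 1 := by rw [he, EuclideanSpace.norm_single]; simp
  set R : EuclideanSpace ℝ (Fin (n+1)) ≃ₗᵢ[ℝ] EuclideanSpace ℝ (Fin (n+1)) :=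
    (Submodule.span ℝ {u - e})ᗮ.reflection with hR
  have hRu : R u = e := Submodule.reflection_sub (by rw [hu, hnorme])
  set Ψ : EuclideanSpace ℝ (Fin (n+1)) ≃ᵐ ℝ × (Fin n → ℝ) :=
    (R.toHomeomorph.toMeasurableEquiv).trans
      ((MeasurableEquiv.toLp 2 (Fin (n+1) → ℝ)).symm.trans
        (MeasurableEquiv.piFinSuccAbove (fun _ : Fin (n+1) => ℝ) 0)) with hΨ
  have hΨx : ∀ x, Ψ x = ((R x) 0, fun j => (R x) ((0 : Fin (n+1)).succAbove j)) := fun _ => rfl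
  have hfst : ∀ x, (Ψ x).1 = (inner ℝ x u : ℝ) := by
    intro x
    have h1 : (Ψ x).1 = (R x) 0 := rfl
    have h2 : (inner ℝ (R x) e : ℝ) = (R x) 0 := by
      rw [he, EuclideanSpace.inner_single_right]
      simp
    rw [h1, ← h2, ← hRu, LinearIsometryEquiv.inner_map_map]
  have hmp : MeasurePreserving Ψ volume volume :=
    ((volume_preserving_piFinSuccAbove (fun _ : Fin (n+1) => ℝ) 0).comp
      (EuclideanSpace.volume_preserving_symm_measurableEquiv_toLp (Fin (n+1)))).comp
      R.measurePreserving
  have hΨcont : Continuous Ψ := by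
    have h1 : Continuous (⇑(MeasurableEquiv.toLp 2 (Fin (n+1) → ℝ)).symm) :=
      (PiLp.continuousLinearEquiv 2 ℝ (fun _ : Fin (n+1) => ℝ)).continuous
    have h2 : Continuous (⇑(MeasurableEquiv.piFinSuccAbove (fun _ : Fin (n+1) => ℝ) 0)) :=
      ((continuous_apply _).prodMk (continuous_pi fun j => continuous_apply _))
    exact (h2.comp h1).comp R.continuous
  set K : Set (ℝ × (Fin n → ℝ)) := Ψ '' L with hK
  have hKc : IsCompact K := hLc.image hΨcont
  have hKconv : Convex ℝ K := by
    let ℓ : EuclideanSpace ℝ (Fin (n+1)) →ₗ[ℝ] ℝ × (Fin n → ℝ) :=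
      { toFun := fun x => ((R x) 0, fun j => (R x) ((0 : Fin (n+1)).succAbove j))
        map_add' := by
          intro x y
          simp only [map_add]
          rfl
        map_smul' := by
          intro c x
          simp only [_root_.map_smul]
          rfl }
    have himg : K = ℓ '' L := image_congr fun x _ => hΨx x
    rw [himg]
    exact hLconv.linear_image ℓ
  have hLm : MeasurableSet L := hLc.isClosed.measurableSet
  have hvolK : 0 < volume K := by
    have h1 : K = Ψ.symm ⁻¹' L := by
      rw [hK, MeasurableEquiv.image_eq_preimage_symm]
    have h2 : volume K = volume L := by
      rw [h1, (hmp.symm Ψ).measure_preimage hLm.nullMeasurableSet]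
    rw [h2]
    calc (0:ENNReal) < volume (interior L) := isOpen_interior.measure_pos volume hLint
      _ ≤ volume L := measure_mono interior_subset
  have hcentK : ∫ pp in K, pp.1 = 0 := by
    rw [hK, hmp.setIntegral_image_emb Ψ.measurableEmbedding _ L]
    have h1 : ∀ x, (Ψ x).1 = (inner ℝ u x : ℝ) := by
      intro x
      rw [hfst x, real_inner_comm]
    simp_rw [h1, ← innerSL_apply_apply (𝕜 := ℝ)]
    have hid : IntegrableOn (fun x => x) L volume :=
      ContinuousOn.integrableOn_compact hLc continuousOn_id
    rw [ContinuousLinearMap.integral_comp_comm (innerSL ℝ u) hid, hcent]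
    simp
  have hmain := key_prod hKc hKconv hvolK hcentK
  have himg1 : Prod.fst '' K = (fun x => (inner ℝ x u : ℝ)) '' L := by
    rw [hK, image_image]
    exact image_congr fun x _ => hfst x
  have himg2 : (fun x => (inner ℝ x (-u) : ℝ)) '' L = -((fun x => (inner ℝ x u : ℝ)) '' L) := by
    have : (fun x : EuclideanSpace ℝ (Fin (n+1)) => (inner ℝ x (-u) : ℝ))
        = (fun r : ℝ => -r) ∘ (fun x => (inner ℝ x u : ℝ)) := by
      funext x
      simp [inner_neg_right]
    rw [this, image_comp]
    simp
  rw [himg1] at hmain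
  have h3 : -sInf ((fun x => (inner ℝ x u : ℝ)) '' L) = sSup (-((fun x => (inner ℝ x u : ℝ)) '' L)) := by
    rw [Real.sInf_def, neg_neg]
  rw [himg2, ← h3]
  exact hmain

/-- If `L` is a convex body in `ℝᵏ` with centroid at the origin, then `-L ⊆ k·L`;
equivalently, for every unit vector `θ`, `1/k ≤ ‖θ‖_L/‖-θ‖_L ≤ k`,
where `‖·‖_L` is the Minkowski functional (gauge) of `L`. -/
theorem neg_subset_smul (k : ℕ) (hk : 1 ≤ k) (L : Set (EuclideanSpace ℝ (Fin k)))
    (hLc : IsCompact L) (hLconv : Convex ℝ L) (hLint : (interior L).Nonempty)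
    (hcent : ∫ x in L, x = 0) :
    (-L ⊆ (k : ℝ) • L) ∧
      ∀ θ : EuclideanSpace ℝ (Fin k), ‖θ‖ = 1 →
        1 / (k : ℝ) ≤ gauge L θ / gauge L (-θ) ∧ gauge L θ / gauge L (-θ) ≤ k := by
  obtain ⟨n, rfl⟩ : ∃ n, k = n + 1 := ⟨k - 1, (Nat.succ_pred_eq_of_pos hk).symm⟩
  set c : ℝ := ((n+1 : ℕ) : ℝ) with hc
  have hc1 : c = (n:ℝ) + 1 := by rw [hc]; push_cast; ring
  have hcpos : (0:ℝ) < c := by rw [hc1]; positivity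
  set S : EuclideanSpace ℝ (Fin (n+1)) → ℝ := fun u => sSup ((fun x => (inner ℝ x u : ℝ)) '' L) with hS
  have hkey : ∀ u : EuclideanSpace ℝ (Fin (n+1)), ‖u‖ = 1 → S u ≤ c * S (-u) := by
    intro u hu
    rw [hc1]
    exact key_sup hLc hLconv hLint hcent u hu
  have hLne : L.Nonempty := by
    obtain ⟨x, hx⟩ := hLint
    exact ⟨x, interior_subset hx⟩
  have hcont : ∀ u : EuclideanSpace ℝ (Fin (n+1)), Continuous fun x : EuclideanSpace ℝ (Fin (n+1)) => (inner ℝ x u : ℝ) :=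
    fun u => Continuous.inner continuous_id continuous_const
  have hbdd : ∀ u : EuclideanSpace ℝ (Fin (n+1)), BddAbove ((fun x => (inner ℝ x u : ℝ)) '' L) :=
    fun u => (hLc.image (hcont u)).bddAbove
  have hle : ∀ (u : EuclideanSpace ℝ (Fin (n+1))), ∀ x ∈ L, (inner ℝ x u : ℝ) ≤ S u :=
    fun u x hx => le_csSup (hbdd u) ⟨x, hx, rfl⟩
  -- positivity of support function
  obtain ⟨x₀, hx₀⟩ := hLint
  obtain ⟨ε, hε, hball⟩ := Metric.isOpen_iff.1 isOpen_interior x₀ hx₀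
  have hSpos : ∀ u : EuclideanSpace ℝ (Fin (n+1)), ‖u‖ = 1 → 0 < S u := by
    intro u hu
    have huu : (inner ℝ u u : ℝ) = 1 := by
      rw [real_inner_self_eq_norm_sq, hu]; norm_num
    have hmem : ∀ w : EuclideanSpace ℝ (Fin (n+1)), ‖w‖ = 1 → x₀ + (ε/2) • w ∈ L := by
      intro w hw
      apply interior_subset
      apply hball
      rw [Metric.mem_ball, dist_eq_norm]
      simp only [add_sub_cancel_left]
      rw [norm_smul, hw, Real.norm_eq_abs, abs_of_pos (by linarith : (0:ℝ) < ε/2), mul_one]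
      linarith
    have h1 : (inner ℝ x₀ u : ℝ) + ε/2 ≤ S u := by
      have := hle u _ (hmem u hu)
      rwa [inner_add_left, real_inner_smul_left, huu, mul_one] at this
    have h2 : -(inner ℝ x₀ u : ℝ) + ε/2 ≤ S (-u) := by
      have hnu : ‖-u‖ = 1 := by rw [norm_neg, hu]
      have := hle (-u) _ (hmem (-u) hnu)
      rwa [inner_add_left, real_inner_smul_left, inner_neg_neg, huu, mul_one,
        inner_neg_right] at this
    by_contra hcon
    push_neg at hcon
    have h3 : S (-u) ≤ c * S u := by
      have := hkey (-u) (by rw [norm_neg, hu])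
      rwa [neg_neg] at this
    have h4 : S (-u) ≤ 0 := h3.trans (by nlinarith)
    linarith
  -- 0 is in the interior
  have h0int : (0 : EuclideanSpace ℝ (Fin (n+1))) ∈ interior L := by
    by_contra h
    obtain ⟨f, hf⟩ := geometric_hahn_banach_open_point (hLconv.interior) isOpen_interior h
    set v  : EuclideanSpace ℝ (Fin (n+1)) := (InnerProductSpace.toDual ℝ (EuclideanSpace ℝ (Fin (n+1)))).symm f with hv
    have hvapp : ∀ x : EuclideanSpace ℝ (Fin (n+1)), (inner ℝ v x : ℝ) = f x := by
      intro x
      rw [hv, InnerProductSpace.toDual_symm_apply]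
    have hf0 : f 0 = 0 := map_zero f
    have hfx₀ : f x₀ < 0 := by
      have := hf x₀ hx₀
      rwa [hf0] at this
    have hvne : v ≠ 0 := by
      intro hveq
      rw [← hvapp x₀, hveq, inner_zero_left] at hfx₀
      exact lt_irrefl _ hfx₀
    set u  : EuclideanSpace ℝ (Fin (n+1)) := ‖v‖⁻¹ • v with hu
    have hunorm : ‖u‖ = 1 := norm_smul_inv_norm hvne
    have hfneg : ∀ y ∈ L, f y ≤ 0 := by
      intro y hy
      by_contra hfy
      push_neg at hfy
      set d : ℝ := f y - f x₀ with hd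
      have hdpos : 0 < d := by rw [hd]; linarith
      set t : ℝ := f y / d with ht
      have ht0 : 0 < t := div_pos hfy hdpos
      have ht1 : t < 1 := by
        rw [ht, div_lt_one hdpos, hd]
        linarith
      have hzmem : t • x₀ + (1-t) • y ∈ interior L :=
        hLconv.combo_interior_self_mem_interior hx₀ hy ht0 (by linarith) (by ring)
      have := hf _ hzmem
      rw [hf0, map_add, _root_.map_smul, _root_.map_smul, smul_eq_mul, smul_eq_mul] at this
      have hcomb : t * f x₀ + (1 - t) * f y = 0 := by
        rw [ht, hd]
        field_simp [show f y - f x₀ ≠ 0 from ne_of_gt (by linarith)]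
        ring
      linarith
    have hSneg : S u ≤ 0 := by
      apply csSup_le (hLne.image _)
      rintro r ⟨y, hy, rfl⟩
      dsimp only
      have : (inner ℝ y u : ℝ) = ‖v‖⁻¹ * f y := by
        rw [hu, real_inner_smul_right, real_inner_comm, hvapp]
      rw [this]
      have := hfneg y hy
      have hvn : (0:ℝ) ≤ ‖v‖⁻¹ := by positivity
      exact mul_nonpos_of_nonneg_of_nonpos hvn this
    exact absurd (hSpos u hunorm) (not_lt.2 hSneg)
  -- the inclusion
  have hsub : -L ⊆ c • L := by
    intro z hz
    rw [Set.mem_neg] at hz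
    rw [mem_smul_set_iff_inv_smul_mem₀ hcpos.ne']
    by_contra hnot
    obtain ⟨f, s, hfL, hfw⟩ :=
      geometric_hahn_banach_closed_point hLconv hLc.isClosed hnot
    set v  : EuclideanSpace ℝ (Fin (n+1)) := (InnerProductSpace.toDual ℝ (EuclideanSpace ℝ (Fin (n+1)))).symm f with hv
    have hvapp : ∀ x : EuclideanSpace ℝ (Fin (n+1)), (inner ℝ v x : ℝ) = f x := by
      intro x
      rw [hv, InnerProductSpace.toDual_symm_apply]
    have hvne : v ≠ 0 := by
      intro hveq
      obtain ⟨y, hy⟩ := hLne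
      have h1 := hfL y hy
      rw [← hvapp y, hveq, inner_zero_left] at h1
      rw [← hvapp _, hveq, inner_zero_left] at hfw
      linarith
    set u  : EuclideanSpace ℝ (Fin (n+1)) := ‖v‖⁻¹ • v with hu
    have hunorm : ‖u‖ = 1 := norm_smul_inv_norm hvne
    have hvipos : (0:ℝ) < ‖v‖⁻¹ := by
      have : (0:ℝ) < ‖v‖ := norm_pos_iff.2 hvne
      positivity
    have hSle : S u ≤ ‖v‖⁻¹ * s := by
      apply csSup_le (hLne.image _)
      rintro r ⟨y, hy, rfl⟩
      dsimp only
      have heq : (inner ℝ y u : ℝ) = ‖v‖⁻¹ * f y := by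
        rw [hu, real_inner_smul_right, real_inner_comm, hvapp]
      rw [heq]
      exact mul_le_mul_of_nonneg_left (hfL y hy).le hvipos.le
    have hwu : (inner ℝ (c⁻¹ • z) u : ℝ) = ‖v‖⁻¹ * f (c⁻¹ • z) := by
      rw [hu, real_inner_smul_right, real_inner_comm, hvapp]
    have hchain : S u < (inner ℝ (c⁻¹ • z) u : ℝ) := by
      rw [hwu]
      calc S u ≤ ‖v‖⁻¹ * s := hSle
        _ < ‖v‖⁻¹ * f (c⁻¹ • z) := by
          exact mul_lt_mul_of_pos_left hfw hvipos
    have hzx : (inner ℝ (c⁻¹ • z) u : ℝ) = c⁻¹ * (inner ℝ (-z) (-u) : ℝ) := by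
      rw [real_inner_smul_left, inner_neg_neg]
    have hup : (inner ℝ (-z) (-u) : ℝ) ≤ S (-u) := hle (-u) (-z) hz
    have hfin : (inner ℝ (c⁻¹ • z) u : ℝ) ≤ S u := by
      rw [hzx]
      calc c⁻¹ * (inner ℝ (-z) (-u) : ℝ) ≤ c⁻¹ * S (-u) := by
            exact mul_le_mul_of_nonneg_left hup (by positivity)
        _ ≤ c⁻¹ * (c * S u) := by
            exact mul_le_mul_of_nonneg_left (hkey u hunorm |> fun h => by
              -- S u ≤ c * S (-u) is wrong direction; need S(-u) ≤ c * S u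
              exact (by
                have h2 := hkey (-u) (by rw [norm_neg, hunorm])
                rwa [neg_neg] at h2)) (by positivity)
        _ = S u := by
            field_simp
    exact absurd hchain (not_lt.2 hfin)
  refine ⟨hsub, ?_⟩
  -- gauge part
  have habs : Absorbent ℝ L := absorbent_nhds_zero (mem_interior_iff_mem_nhds.1 h0int)
  have h0intneg : (0 : EuclideanSpace ℝ (Fin (n+1))) ∈ interior (-L) := by
    have h1 : (Homeomorph.neg (EuclideanSpace ℝ (Fin (n+1)))) ⁻¹' interior L
        = interior ((Homeomorph.neg (EuclideanSpace ℝ (Fin (n+1)))) ⁻¹' L) :=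
      Homeomorph.preimage_interior _ _
    have h2 : (Homeomorph.neg (EuclideanSpace ℝ (Fin (n+1)))) ⁻¹' L = -L := rfl
    rw [h2] at h1
    rw [← h1]
    simpa using h0int
  have habsneg : Absorbent ℝ (-L) := absorbent_nhds_zero (mem_interior_iff_mem_nhds.1 h0intneg)
  have hvnb : Bornology.IsVonNBounded ℝ L := (NormedSpace.isVonNBounded_iff ℝ).2 hLc.isBounded
  intro θ hθ
  have hθne : θ ≠ 0 := by
    intro h
    rw [h, norm_zero] at hθ
    norm_num at hθ
  have hgp : 0 < gauge L θ := (gauge_pos habs hvnb).2 hθne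
  have hgn : 0 < gauge L (-θ) := (gauge_pos habs hvnb).2 (neg_ne_zero.2 hθne)
  have hmono : gauge (c • L) ≤ gauge (-L) := gauge_mono habsneg hsub
  have hsmul : ∀ x : EuclideanSpace ℝ (Fin (n+1)), gauge (c • L) x = c⁻¹ * gauge L x := by
    intro x
    rw [gauge_smul_left_of_nonneg (le_of_lt hcpos)]
    simp
  have hineq1 : c⁻¹ * gauge L θ ≤ gauge L (-θ) := by
    have := hmono θ
    rwa [hsmul, gauge_neg_set_eq_gauge_neg] at this
  have hineq2 : c⁻¹ * gauge L (-θ) ≤ gauge L θ := by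
    have := hmono (-θ)
    rwa [hsmul, gauge_neg_set_eq_gauge_neg, neg_neg] at this
  constructor
  · rw [le_div_iff₀ hgn]
    calc 1/c * gauge L (-θ) = c⁻¹ * gauge L (-θ) := by rw [one_div]
      _ ≤ gauge L θ := hineq2
  · rw [div_le_iff₀ hgn]
    have h3 := mul_le_mul_of_nonneg_left hineq1 hcpos.le
    rwa [mul_inv_cancel_left₀ hcpos.ne'] at h3
end

section
/- There exist universal constants c₁, c₂ > 0 such that for all real x, y ≥ 1: c₁·x/(x+y) ≤ B(x,y)^{1/x} ≤ c₂·x/(x+y), where B is the Beta function. -/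
/-- The Beta function `B(x,y) = ∫₀¹ t^{x-1} (1-t)^{y-1} dt`. -/
noncomputable def Beta (x y : ℝ) : ℝ := ∫ t in (0:ℝ)..1, t ^ (x - 1) * (1 - t) ^ (y - 1)


open Real

-- log-convexity in multiplicative form
lemma gamma_combo {p q : ℝ} (hp : 0 < p) (hq : 0 < q) {θ : ℝ} (h0 : 0 ≤ θ) (h1 : θ ≤ 1) :
    Real.Gamma ((1-θ)*p + θ*q) ≤ Real.Gamma p ^ (1-θ) * Real.Gamma q ^ θ := by
  have hc : 0 < (1-θ)*p + θ*q := by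
    rcases lt_or_eq_of_le h1 with h | h
    · nlinarith
    · subst h; nlinarith
  have key := Real.convexOn_log_Gamma.2 (Set.mem_Ioi.2 hp) (Set.mem_Ioi.2 hq)
    (by linarith : (0:ℝ) ≤ 1-θ) h0 (by ring)
  simp only [Function.comp_apply, smul_eq_mul] at key
  have h2 : Real.Gamma ((1-θ)*p + θ*q) = Real.exp (Real.log (Real.Gamma ((1-θ)*p + θ*q))) :=
    (Real.exp_log (Real.Gamma_pos_of_pos hc)).symm
  rw [h2]
  calc Real.exp (Real.log (Real.Gamma ((1-θ)*p + θ*q)))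
      ≤ Real.exp ((1-θ) * Real.log (Real.Gamma p) + θ * Real.log (Real.Gamma q)) :=
        Real.exp_le_exp.2 key
    _ = Real.Gamma p ^ (1-θ) * Real.Gamma q ^ θ := by
        rw [Real.exp_add, Real.rpow_def_of_pos (Real.Gamma_pos_of_pos hp),
          Real.rpow_def_of_pos (Real.Gamma_pos_of_pos hq), mul_comm (1-θ), mul_comm θ]

-- Γ(z+s) ≤ Γ(z) * z^s for z>0, s∈[0,1]
lemma gamma_frac_up {z s : ℝ} (hz : 0 < z) (h0 : 0 ≤ s) (h1 : s ≤ 1) :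
    Real.Gamma (z + s) ≤ Real.Gamma z * z ^ s := by
  have h := gamma_combo hz (by linarith : (0:ℝ) < z + 1) h0 h1
  have e : (1-s)*z + s*(z+1) = z + s := by ring
  rw [e] at h
  have hG : 0 < Real.Gamma z := Real.Gamma_pos_of_pos hz
  calc Real.Gamma (z+s) ≤ Real.Gamma z ^ (1-s) * Real.Gamma (z+1) ^ s := h
    _ = Real.Gamma z ^ (1-s) * (z * Real.Gamma z) ^ s := by
        rw [Real.Gamma_add_one (ne_of_gt hz)]
    _ = Real.Gamma z ^ (1-s) * (z ^ s * Real.Gamma z ^ s) := by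
        rw [Real.mul_rpow hz.le hG.le]
    _ = (Real.Gamma z ^ (1-s) * Real.Gamma z ^ s) * z ^ s := by ring
    _ = Real.Gamma z * z ^ s := by
        rw [← Real.rpow_add hG]; norm_num

-- z * Γ(z) ≤ Γ(z+s) * (z+s)^(1-s) for z>0, s∈[0,1]
lemma gamma_frac_dn {z s : ℝ} (hz : 0 < z) (h0 : 0 ≤ s) (h1 : s ≤ 1) :
    z * Real.Gamma z ≤ Real.Gamma (z + s) * (z + s) ^ (1 - s) := by
  have hzs : 0 < z + s := by linarith
  have h := gamma_combo hzs (by linarith : (0:ℝ) < z + s + 1)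
    (by linarith : (0:ℝ) ≤ 1 - s) (by linarith : (1:ℝ) - s ≤ 1)
  have e : (1-(1-s))*(z+s) + (1-s)*(z+s+1) = z + 1 := by ring
  rw [e] at h
  have hG : 0 < Real.Gamma (z+s) := Real.Gamma_pos_of_pos hzs
  have h2 : Real.Gamma (z+1) = z * Real.Gamma z := Real.Gamma_add_one (ne_of_gt hz)
  calc z * Real.Gamma z = Real.Gamma (z+1) := h2.symm
    _ ≤ Real.Gamma (z+s) ^ (1-(1-s)) * Real.Gamma (z+s+1) ^ (1-s) := h
    _ = Real.Gamma (z+s) ^ s * ((z+s) * Real.Gamma (z+s)) ^ (1-s) := by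
        rw [Real.Gamma_add_one (ne_of_gt hzs)]; norm_num
    _ = Real.Gamma (z+s) ^ s * ((z+s) ^ (1-s) * Real.Gamma (z+s) ^ (1-s)) := by
        rw [Real.mul_rpow hzs.le hG.le]
    _ = (Real.Gamma (z+s) ^ s * Real.Gamma (z+s) ^ (1-s)) * (z+s) ^ (1-s) := by ring
    _ = Real.Gamma (z+s) * (z+s) ^ (1-s) := by
        rw [← Real.rpow_add hG]; norm_num

-- Γ(w+n) ≤ Γ(w) * (w+n)^n
lemma gamma_nat_up {w : ℝ} (hw : 0 < w) (n : ℕ) :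
    Real.Gamma (w + n) ≤ Real.Gamma w * (w + n) ^ n := by
  induction n with
  | zero => simp
  | succ n ih =>
    have hwn : (0:ℝ) < w + n := by positivity
    have e : w + ((n:ℝ)+1) = (w + n) + 1 := by ring
    push_cast
    rw [e, Real.Gamma_add_one (ne_of_gt hwn)]
    have hG : 0 ≤ Real.Gamma w := (Real.Gamma_pos_of_pos hw).le
    calc (w+n) * Real.Gamma (w+n) ≤ (w+n) * (Real.Gamma w * (w+n)^n) := by
          apply mul_le_mul_of_nonneg_left ih hwn.le
      _ = Real.Gamma w * (w+n)^(n+1) := by ring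
      _ ≤ Real.Gamma w * (w+n+1)^(n+1) := by
          apply mul_le_mul_of_nonneg_left _ hG
          apply pow_le_pow_left₀ hwn.le (by linarith)

-- Γ(w) * w^n ≤ Γ(w+n)
lemma gamma_nat_dn {w : ℝ} (hw : 0 < w) (n : ℕ) :
    Real.Gamma w * w ^ n ≤ Real.Gamma (w + n) := by
  induction n with
  | zero => simp
  | succ n ih =>
    have hwn : (0:ℝ) < w + n := by positivity
    have e : w + ((n:ℝ)+1) = (w + n) + 1 := by ring
    push_cast
    rw [e, Real.Gamma_add_one (ne_of_gt hwn)]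
    have hG : 0 ≤ Real.Gamma w := (Real.Gamma_pos_of_pos hw).le
    calc Real.Gamma w * w^(n+1) = w * (Real.Gamma w * w^n) := by ring
      _ ≤ w * Real.Gamma (w+n) := by apply mul_le_mul_of_nonneg_left ih hw.le
      _ ≤ (w+n) * Real.Gamma (w+n) := by
          apply mul_le_mul_of_nonneg_right _ (Real.Gamma_pos_of_pos hwn).le
          linarith [Nat.cast_nonneg (α := ℝ) n]

-- Γ(x) ≤ x^x for x ≥ 1
lemma gamma_le_rpow_self {x : ℝ} (hx : 1 ≤ x) : Real.Gamma x ≤ x ^ x := by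
  set n := ⌊x⌋₊ with hn
  have hn1 : 1 ≤ n := Nat.le_floor (by exact_mod_cast hx)
  have hnx : (n:ℝ) ≤ x := Nat.floor_le (by linarith)
  have hxn : x < n + 1 := Nat.lt_floor_add_one x
  set s := x - n with hs
  have hs0 : 0 ≤ s := by simp [hs]; linarith
  have hs1 : s ≤ 1 := by simp [hs]; linarith
  set m := n - 1 with hm
  have hmx : (m:ℝ) = (n:ℝ) - 1 := by
    have : (m:ℕ) + 1 = n := Nat.succ_pred_eq_of_pos hn1
    have := congrArg (Nat.cast (R := ℝ)) this
    push_cast at this; linarith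
  have hx1 : (0:ℝ) < 1 + s := by linarith
  have e : x = (1 + s) + m := by rw [hmx]; ring
  have h1 : Real.Gamma x ≤ Real.Gamma (1+s) * ((1+s)+m)^m := by
    rw [e]; exact gamma_nat_up hx1 m
  have h2 : Real.Gamma (1+s) ≤ 1 := by
    have := gamma_frac_up (zero_lt_one) hs0 hs1
    simpa using this
  have hxpos : (0:ℝ) < x := by linarith
  have h3 : ((1+s)+(m:ℝ))^m ≤ x^x := by
    rw [← e, ← Real.rpow_natCast x m]
    apply Real.rpow_le_rpow_of_exponent_le hx
    rw [hmx]; linarith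
  calc Real.Gamma x ≤ Real.Gamma (1+s) * ((1+s)+m)^m := h1
    _ ≤ 1 * ((1+s)+(m:ℝ))^m := by
        apply mul_le_mul_of_nonneg_right h2
        positivity
    _ = ((1+s)+(m:ℝ))^m := one_mul _
    _ ≤ x^x := h3

-- Γ(y) * y^x ≤ Γ(x+y) for x ≥ 1, y > 0
lemma gamma_add_ge {x y : ℝ} (hx : 1 ≤ x) (hy : 0 < y) :
    Real.Gamma y * y ^ x ≤ Real.Gamma (x + y) := by
  set n := ⌊x⌋₊ with hn
  have hn1 : 1 ≤ n := Nat.le_floor (by exact_mod_cast hx)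
  have hnx : (n:ℝ) ≤ x := Nat.floor_le (by linarith)
  have hxn : x < n + 1 := Nat.lt_floor_add_one x
  set s := x - n with hs
  have hs0 : 0 ≤ s := by simp [hs]; linarith
  have hs1 : s ≤ 1 := by simp [hs]; linarith
  have hys : 0 < y + s := by linarith
  have hGy : 0 < Real.Gamma y := Real.Gamma_pos_of_pos hy
  have hGys : 0 < Real.Gamma (y+s) := Real.Gamma_pos_of_pos hys
  have e : x + y = (y + s) + n := by simp [hs]; ring
  -- step 1 : Γ(y+s) * (y+s)^n ≤ Γ(x+y)
  have h1 : Real.Gamma (y+s) * (y+s)^n ≤ Real.Gamma (x+y) := by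
    rw [e]; exact gamma_nat_dn hys n
  -- step 2 : y * Γ(y) ≤ Γ(y+s) * (y+s)^(1-s)
  have h2 := gamma_frac_dn hy hs0 hs1
  -- goal * (y+s)^(1-s) : Γ(y) * y^x * (y+s)^(1-s) ≤ Γ(x+y) * (y+s)^(1-s)
  have hpow : (0:ℝ) < (y+s)^(1-s) := Real.rpow_pos_of_pos hys _
  have key : Real.Gamma y * y ^ x * (y+s)^(1-s) ≤ Real.Gamma (x+y) * (y+s)^(1-s) := by
    have ha : y ^ x = y * y^(x-1) := by
      rw [← Real.rpow_one_add' (by linarith) (by linarith)]; ring_nf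
    have hb : y ^ (x-1) ≤ (y+s)^(x-1) := by
      apply Real.rpow_le_rpow hy.le (by linarith) (by linarith)
    have hc : (y+s)^(x-1) * (y+s)^(1-s) = (y+s)^(n:ℝ) := by
      rw [← Real.rpow_add hys]
      congr 1
      rw [hs]; ring
    calc Real.Gamma y * y ^ x * (y+s)^(1-s)
        = (y * Real.Gamma y) * (y^(x-1) * (y+s)^(1-s)) := by rw [ha]; ring
      _ ≤ (Real.Gamma (y+s) * (y+s)^(1-s)) * ((y+s)^(x-1) * (y+s)^(1-s)) := by
          apply mul_le_mul h2 _ _ (by positivity)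
          · apply mul_le_mul_of_nonneg_right hb hpow.le
          · positivity
      _ = (Real.Gamma (y+s) * ((y+s)^(x-1) * (y+s)^(1-s))) * (y+s)^(1-s) := by ring
      _ = (Real.Gamma (y+s) * (y+s)^(n:ℝ)) * (y+s)^(1-s) := by rw [hc]
      _ = (Real.Gamma (y+s) * (y+s)^(n:ℕ)) * (y+s)^(1-s) := by
          rw [Real.rpow_natCast]
      _ ≤ Real.Gamma (x+y) * (y+s)^(1-s) := by
          apply mul_le_mul_of_nonneg_right h1 hpow.le
  exact le_of_mul_le_mul_right key hpow



lemma beta_eq_gamma {x y : ℝ} (hx : 0 < x) (hy : 0 < y) :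
    Beta x y = Real.Gamma x * Real.Gamma y / Real.Gamma (x + y) := by
  have hxc : 0 < (x:ℂ).re := by simpa using hx
  have hyc : 0 < (y:ℂ).re := by simpa using hy
  have hB : Complex.betaIntegral x y = ((Beta x y : ℝ) : ℂ) := by
    rw [Complex.betaIntegral, Beta, ← intervalIntegral.integral_ofReal]
    apply intervalIntegral.integral_congr
    intro t ht
    rw [Set.uIcc_of_le (by norm_num : (0:ℝ) ≤ 1)] at ht
    push_cast
    rw [Complex.ofReal_cpow ht.1, Complex.ofReal_cpow (by linarith [ht.2] : (0:ℝ) ≤ 1 - t)]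
    push_cast
    ring
  have h := Complex.Gamma_mul_Gamma_eq_betaIntegral hxc hyc
  rw [hB, ← Complex.ofReal_add, Complex.Gamma_ofReal, Complex.Gamma_ofReal,
    Complex.Gamma_ofReal] at h
  have h' : Real.Gamma x * Real.Gamma y = Real.Gamma (x+y) * Beta x y := by
    exact_mod_cast h
  have hG : Real.Gamma (x+y) ≠ 0 := ne_of_gt (Real.Gamma_pos_of_pos (by linarith))
  field_simp [hG] at h' ⊢
  linarith [h']

lemma beta_integrand_continuous {x y : ℝ} (hx : 1 ≤ x) (hy : 1 ≤ y) :
    Continuous (fun t : ℝ => t ^ (x - 1) * (1 - t) ^ (y - 1)) := by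
  have c1 : Continuous fun t : ℝ => t ^ (x-1) :=
    Real.continuous_rpow_const (by linarith)
  have c2 : Continuous fun t : ℝ => (1 - t) ^ (y-1) :=
    (Real.continuous_rpow_const (by linarith)).comp (continuous_const.sub continuous_id)
  exact c1.mul c2

lemma beta_nonneg {x y : ℝ} (hx : 1 ≤ x) (hy : 1 ≤ y) : 0 ≤ Beta x y := by
  unfold Beta
  apply intervalIntegral.integral_nonneg (by norm_num : (0:ℝ) ≤ 1)
  intro t ht
  exact mul_nonneg (Real.rpow_nonneg ht.1 _) (Real.rpow_nonneg (by linarith [ht.2]) _)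

lemma beta_le_one {x y : ℝ} (hx : 1 ≤ x) (hy : 1 ≤ y) : Beta x y ≤ 1 := by
  have h := intervalIntegral.integral_mono_on (by norm_num : (0:ℝ) ≤ 1)
    ((beta_integrand_continuous hx hy).intervalIntegrable 0 1)
    (intervalIntegrable_const : IntervalIntegrable (fun _ => (1:ℝ)) MeasureTheory.volume 0 1)
    (fun t ht => by
      have h1 : t ^ (x-1) ≤ 1 := Real.rpow_le_one ht.1 ht.2 (by linarith)
      have h2 : (1-t) ^ (y-1) ≤ 1 :=
        Real.rpow_le_one (by linarith [ht.2]) (by linarith [ht.1]) (by linarith)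
      calc t ^ (x-1) * (1-t) ^ (y-1) ≤ 1 * 1 :=
            mul_le_mul h1 h2 (Real.rpow_nonneg (by linarith [ht.2]) _) zero_le_one
        _ = 1 := by norm_num)
  unfold Beta
  simpa using h

lemma beta_lower {x y : ℝ} (hx : 1 ≤ x) (hy : 1 ≤ y) :
    (x / (x + y) * Real.exp (-2)) ^ x ≤ Beta x y := by
  have hx0 : 0 < x := by linarith
  have hy0 : 0 < y := by linarith
  have hxy : 0 < x + y := by linarith
  set a := x / (x + y) with ha
  have ha0 : 0 < a := by positivity
  have ha1 : a < 1 := by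
    rw [ha, div_lt_one hxy]; linarith
  have h1a : 1 - a = y / (x + y) := by rw [ha]; field_simp; ring
  have cf := beta_integrand_continuous hx hy
  set f : ℝ → ℝ := fun t => t ^ (x-1) * (1-t) ^ (y-1) with hf
  set g : ℝ → ℝ := fun t => t ^ (x-1) * (1-a) ^ (y-1) with hg
  -- tail nonneg
  have h_add : (∫ t in (0:ℝ)..a, f t) + (∫ t in a..(1:ℝ), f t) = Beta x y :=
    intervalIntegral.integral_add_adjacent_intervals
      (cf.intervalIntegrable 0 a) (cf.intervalIntegrable a 1)
  have h_tail : 0 ≤ ∫ t in a..(1:ℝ), f t := by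
    apply intervalIntegral.integral_nonneg ha1.le
    intro t ht
    exact mul_nonneg (Real.rpow_nonneg (le_trans ha0.le ht.1) _)
      (Real.rpow_nonneg (by linarith [ht.2]) _)
  -- monotone comparison on [0,a]
  have cg : Continuous g := by
    have : Continuous fun t : ℝ => t ^ (x-1) := Real.continuous_rpow_const (by linarith)
    exact this.mul continuous_const
  have h_mono : (∫ t in (0:ℝ)..a, g t) ≤ ∫ t in (0:ℝ)..a, f t := by
    apply intervalIntegral.integral_mono_on ha0.le
      (cg.intervalIntegrable 0 a) (cf.intervalIntegrable 0 a)
    intro t ht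
    have h2 : (1-a) ^ (y-1) ≤ (1-t) ^ (y-1) :=
      Real.rpow_le_rpow (by linarith) (by linarith [ht.2]) (by linarith)
    exact mul_le_mul_of_nonneg_left h2 (Real.rpow_nonneg ht.1 _)
  -- compute the comparison integral
  have h_comp : (∫ t in (0:ℝ)..a, g t) = a ^ x / x * (1-a) ^ (y-1) := by
    rw [hg]
    rw [intervalIntegral.integral_mul_const, integral_rpow (Or.inl (by linarith : (-1:ℝ) < x - 1))]
    have e : x - 1 + 1 = x := by ring
    rw [e, Real.zero_rpow (ne_of_gt hx0)]
    ring
  -- estimate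
  have e1 : Real.exp (-x) ≤ 1 / x := by
    rw [le_div_iff₀ hx0]
    have hxe : x ≤ Real.exp x := by linarith [Real.add_one_le_exp x]
    calc Real.exp (-x) * x ≤ Real.exp (-x) * Real.exp x := by
          apply mul_le_mul_of_nonneg_left hxe (Real.exp_nonneg _)
      _ = 1 := by rw [← Real.exp_add]; norm_num
  have e2 : Real.exp (-x) ≤ (1-a) ^ (y-1) := by
    have s1 : Real.exp (-(x/y)) ≤ y / (x+y) := by
      have h' : (x+y)/y ≤ Real.exp (x/y) := by
        have := Real.add_one_le_exp (x/y)
        have e : (x+y)/y = x/y + 1 := by field_simp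
        linarith [e ▸ this]
      rw [Real.exp_neg]
      rw [inv_le_comm₀ (Real.exp_pos _) (by positivity)]
      calc (y/(x+y))⁻¹ = (x+y)/y := by rw [inv_div]
        _ ≤ Real.exp (x/y) := h'
    have s2 : (Real.exp (-(x/y))) ^ (y-1) ≤ (y/(x+y)) ^ (y-1) :=
      Real.rpow_le_rpow (Real.exp_nonneg _) s1 (by linarith)
    have s3 : Real.exp (-x) ≤ (Real.exp (-(x/y))) ^ (y-1) := by
      rw [← Real.exp_mul]
      apply Real.exp_le_exp.2
      have : -(x/y) * (y-1) = -x + x/y := by field_simp; ring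
      rw [this]
      have : 0 ≤ x / y := by positivity
      linarith
    rw [h1a]
    exact le_trans s3 s2
  have h_est : (a * Real.exp (-2)) ^ x ≤ a ^ x / x * (1-a) ^ (y-1) := by
    rw [Real.mul_rpow ha0.le (Real.exp_nonneg _), ← Real.exp_mul]
    have e : -2 * x = -x + -x := by ring
    rw [e, Real.exp_add]
    calc a ^ x * (Real.exp (-x) * Real.exp (-x))
        ≤ a ^ x * (1/x * (1-a)^(y-1)) := by
          apply mul_le_mul_of_nonneg_left _ (Real.rpow_nonneg ha0.le _)
          exact mul_le_mul e1 e2 (Real.exp_nonneg _) (by positivity)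
      _ = a ^ x / x * (1-a) ^ (y-1) := by ring
  calc (a * Real.exp (-2)) ^ x ≤ a ^ x / x * (1-a) ^ (y-1) := h_est
    _ = ∫ t in (0:ℝ)..a, g t := h_comp.symm
    _ ≤ ∫ t in (0:ℝ)..a, f t := h_mono
    _ ≤ Beta x y := by linarith [h_add, h_tail]


/-- There are universal constants `c₁, c₂ > 0` with
`c₁ x/(x+y) ≤ B(x,y)^{1/x} ≤ c₂ x/(x+y)` for all `x, y ≥ 1`. -/
theorem beta_rpow_bounds :
    ∃ c₁ c₂ : ℝ, 0 < c₁ ∧ 0 < c₂ ∧ ∀ x y : ℝ, 1 ≤ x → 1 ≤ y →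
      c₁ * x / (x + y) ≤ Beta x y ^ (1 / x) ∧ Beta x y ^ (1 / x) ≤ c₂ * x / (x + y) := by
  refine ⟨Real.exp (-2), 4, Real.exp_pos _, by norm_num, fun x y hx hy => ?_⟩
  have hx0 : 0 < x := by linarith
  have hy0 : 0 < y := by linarith
  have hxy : 0 < x + y := by linarith
  have hB0 : 0 ≤ Beta x y := beta_nonneg hx hy
  constructor
  · -- lower bound
    have hBl := beta_lower hx hy
    have h0 : 0 ≤ x / (x + y) * Real.exp (-2) := by positivity
    have h := Real.rpow_le_rpow (Real.rpow_nonneg h0 x) hBl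
      (by positivity : (0:ℝ) ≤ 1/x)
    rw [← Real.rpow_mul h0, mul_one_div, div_self (ne_of_gt hx0), Real.rpow_one] at h
    have e : Real.exp (-2) * x / (x + y) = x / (x + y) * Real.exp (-2) := by ring
    rw [e]
    exact h
  · -- upper bound
    rcases le_or_gt y (3 * x) with hc | hc
    · have h1 : Beta x y ^ (1/x) ≤ 1 :=
        Real.rpow_le_one hB0 (beta_le_one hx hy) (by positivity)
      have h2 : (1:ℝ) ≤ 4 * x / (x + y) := by
        rw [le_div_iff₀ hxy]; linarith
      linarith
    · -- y > 3x : use Gamma bounds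
      have hGxy : 0 < Real.Gamma (x + y) := Real.Gamma_pos_of_pos hxy
      have hGy : 0 < Real.Gamma y := Real.Gamma_pos_of_pos hy0
      have hB2 : Beta x y ≤ (x/y) ^ x := by
        rw [beta_eq_gamma hx0 hy0, div_le_iff₀ hGxy]
        have k1 : Real.Gamma x * Real.Gamma y ≤ x ^ x * Real.Gamma y :=
          mul_le_mul_of_nonneg_right (gamma_le_rpow_self hx) hGy.le
        have k2 : (x/y) ^ x * (Real.Gamma y * y ^ x) = x ^ x * Real.Gamma y := by
          rw [Real.div_rpow hx0.le hy0.le]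
          field_simp
        have k3 : (x/y) ^ x * (Real.Gamma y * y ^ x) ≤ (x/y) ^ x * Real.Gamma (x+y) :=
          mul_le_mul_of_nonneg_left (gamma_add_ge hx hy0) (Real.rpow_nonneg (by positivity) _)
        calc Real.Gamma x * Real.Gamma y ≤ x ^ x * Real.Gamma y := k1
          _ = (x/y) ^ x * (Real.Gamma y * y ^ x) := k2.symm
          _ ≤ (x/y) ^ x * Real.Gamma (x+y) := k3
      have h1 : Beta x y ^ (1/x) ≤ x / y := by
        have h := Real.rpow_le_rpow hB0 hB2 (by positivity : (0:ℝ) ≤ 1/x)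
        rwa [← Real.rpow_mul (by positivity : (0:ℝ) ≤ x/y), mul_one_div,
          div_self (ne_of_gt hx0), Real.rpow_one] at h
      have h2 : x / y ≤ 4 * x / (x + y) := by
        rw [div_le_div_iff₀ hy0 hxy]
        nlinarith
      linarith
end
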